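/- arXiv:1512.03171 — 6 statements merged into one kernel-verified Lean document; each statement's English description precedes it below -/
import Mathlib

section
/- Let F̂(z) = Mz + G(z) be a lift of a torus map satisfying the expanding-block assumption. Then for every z ∈ ℝ^d the limit Φ̂(z) := lim_{n→∞} A^{−n} P(F̂^n(z)) exists, the convergence is uniform in z, the map Φ̂ : ℝ^d → ℝ^k is continuous, and Φ̂(F̂(z)) = A·Φ̂(z) for every z ∈ ℝ^d. -/
open Filter Topology

noncomputable section

/-- Reinterpret a vector `Fin d → ℝ` as a point of Euclidean space `ℝ^d`. -/
def toEuc (d : ℕ) (v : Fin d → ℝ) : EuclideanSpace ℝ (Fin d) := WithLp.toLp 2 v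

/-- Projection onto the first `k` coordinates of `ℝ^d`. -/
def projP (d k : ℕ) (h : k ≤ d) (z : EuclideanSpace ℝ (Fin d)) :
    EuclideanSpace ℝ (Fin k) :=
  WithLp.toLp 2 (fun i => z (Fin.castLE h i))

lemma projP_add (d k : ℕ) (h : k ≤ d) (x y : EuclideanSpace ℝ (Fin d)) :
    projP d k h (x + y) = projP d k h x + projP d k h y := rfl

lemma projP_norm_le (d k : ℕ) (h : k ≤ d) (z : EuclideanSpace ℝ (Fin d)) :
    ‖projP d k h z‖ ≤ ‖z‖ := by
  rw [EuclideanSpace.norm_eq, EuclideanSpace.norm_eq]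
  apply Real.sqrt_le_sqrt
  have : (∑ i : Fin k, ‖z (Fin.castLE h i)‖ ^ 2)
      = ∑ j ∈ Finset.univ.map (Fin.castLEEmb h), ‖z j‖ ^ 2 := by
    rw [Finset.sum_map]; rfl
  rw [show (∑ i : Fin k, ‖projP d k h z i‖ ^ 2) = ∑ i : Fin k, ‖z (Fin.castLE h i)‖ ^ 2 from rfl,
    this]
  exact Finset.sum_le_sum_of_subset_of_nonneg (Finset.subset_univ _)
    (fun j _ _ => by positivity)

lemma projP_linear (d k : ℕ) (h : k ≤ d) :
    ∃ L : EuclideanSpace ℝ (Fin d) →ₗ[ℝ] EuclideanSpace ℝ (Fin k),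
      ⇑L = projP d k h := by
  exact ⟨{ toFun := projP d k h, map_add' := fun x y => rfl,
           map_smul' := fun c x => rfl }, rfl⟩

/--
Let `F̂(z) = Mz + G(z)` be a lift of a torus map satisfying the
expanding-block assumption. Then for every `z ∈ ℝ^d` the limit
`Φ̂(z) := lim_{n→∞} A⁻ⁿ P(F̂ⁿ(z))` exists, the convergence is uniform in `z`, the map
`Φ̂ : ℝ^d → ℝ^k` is continuous, and `Φ̂(F̂(z)) = A·Φ̂(z)` for every `z`.
-/
theorem stmt0 (d k : ℕ) (hk : 1 ≤ k) (hkd : k ≤ d)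
    (M : Matrix (Fin d) (Fin d) ℝ) (hMint : ∀ i j, ∃ n : ℤ, M i j = (n : ℝ))
    (G : EuclideanSpace ℝ (Fin d) → EuclideanSpace ℝ (Fin d))
    (hGcont : Continuous G) (hGbdd : ∃ C, ∀ z, ‖G z‖ ≤ C)
    (hGper : ∀ (z : EuclideanSpace ℝ (Fin d)) (p : Fin d → ℤ),
      G (z + toEuc d fun i => (p i : ℝ)) = G z)
    (F : EuclideanSpace ℝ (Fin d) → EuclideanSpace ℝ (Fin d))
    (hF : ∀ z, F z = toEuc d (M.mulVec z) + G z)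
    (A : EuclideanSpace ℝ (Fin k) ≃L[ℝ] EuclideanSpace ℝ (Fin k))
    (hPM : ∀ z : EuclideanSpace ℝ (Fin d),
      projP d k hkd (toEuc d (M.mulVec z)) = A (projP d k hkd z))
    (hA : ‖(A.symm : EuclideanSpace ℝ (Fin k) →L[ℝ] EuclideanSpace ℝ (Fin k))‖ < 1) :
    ∃ Φ : EuclideanSpace ℝ (Fin d) → EuclideanSpace ℝ (Fin k),
      (∀ z, Tendsto (fun n : ℕ => (A.symm ^ n) (projP d k hkd (F^[n] z)))
        atTop (𝓝 (Φ z))) ∧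
      TendstoUniformly (fun (n : ℕ) (z : EuclideanSpace ℝ (Fin d)) =>
        (A.symm ^ n) (projP d k hkd (F^[n] z))) Φ atTop ∧
      Continuous Φ ∧
      (∀ z, Φ (F z) = A (Φ z)) := by
  obtain ⟨C, hC⟩ := hGbdd
  set r := ‖(A.symm : EuclideanSpace ℝ (Fin k) →L[ℝ] EuclideanSpace ℝ (Fin k))‖ with hr
  have hr0 : 0 ≤ r := norm_nonneg _
  have hC0 : 0 ≤ C := le_trans (norm_nonneg _) (hC 0)
  -- the sequence of functions
  set φ : ℕ → EuclideanSpace ℝ (Fin d) → EuclideanSpace ℝ (Fin k) :=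
    fun n z => (A.symm ^ n) (projP d k hkd (F^[n] z)) with hφ
  -- the difference terms
  set g : ℕ → EuclideanSpace ℝ (Fin d) → EuclideanSpace ℝ (Fin k) :=
    fun n z => (A.symm ^ (n + 1)) (projP d k hkd (G (F^[n] z))) with hg
  -- norm bound for powers of A.symm
  have hpow : ∀ (n : ℕ) (x : EuclideanSpace ℝ (Fin k)),
      ‖(A.symm ^ n) x‖ ≤ r ^ n * ‖x‖ := by
    intro n
    induction n with
    | zero => intro x; simp only [pow_zero, one_mul]; exact le_of_eq rfl
    | succ n ih =>
      intro x
      have h1 : (A.symm ^ (n + 1)) x = (A.symm ^ n) (A.symm x) := by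
        rw [pow_succ]; rfl
      rw [h1]
      calc ‖(A.symm ^ n) (A.symm x)‖ ≤ r ^ n * ‖A.symm x‖ := ih _
        _ ≤ r ^ n * (r * ‖x‖) := by
            apply mul_le_mul_of_nonneg_left _ (by positivity)
            exact (A.symm : EuclideanSpace ℝ (Fin k) →L[ℝ] EuclideanSpace ℝ (Fin k)).le_opNorm x
        _ = r ^ (n + 1) * ‖x‖ := by ring
  -- key recursion: φ (n+1) z = φ n z + g n z
  have hrec : ∀ (n : ℕ) (z : EuclideanSpace ℝ (Fin d)),
      φ (n + 1) z = φ n z + g n z := by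
    intro n z
    have hit : F^[n + 1] z = F (F^[n] z) := Function.iterate_succ_apply' F n z
    have h1 : projP d k hkd (F^[n + 1] z)
        = A (projP d k hkd (F^[n] z)) + projP d k hkd (G (F^[n] z)) := by
      rw [hit, hF, projP_add, hPM]
    have h2 : ∀ x : EuclideanSpace ℝ (Fin k),
        (A.symm ^ (n + 1)) (A x) = (A.symm ^ n) x := by
      intro x
      have : (A.symm ^ (n + 1)) (A x) = (A.symm ^ n) (A.symm (A x)) := by
        rw [pow_succ]; rfl
      rw [this, A.symm_apply_apply]
    show (A.symm ^ (n + 1)) (projP d k hkd (F^[n + 1] z)) = _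
    rw [h1, map_add, h2]
  -- telescoping
  have htel : ∀ (N : ℕ) (z : EuclideanSpace ℝ (Fin d)),
      φ N z = φ 0 z + ∑ n ∈ Finset.range N, g n z := by
    intro N z
    induction N with
    | zero => simp
    | succ N ih => rw [hrec N z, ih, Finset.sum_range_succ, add_assoc]
  -- bound on g
  have hgbd : ∀ (n : ℕ) (z : EuclideanSpace ℝ (Fin d)),
      ‖g n z‖ ≤ (r * C) * r ^ n := by
    intro n z
    calc ‖g n z‖ ≤ r ^ (n + 1) * ‖projP d k hkd (G (F^[n] z))‖ := hpow _ _
      _ ≤ r ^ (n + 1) * C := by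
          apply mul_le_mul_of_nonneg_left _ (by positivity)
          exact le_trans (projP_norm_le d k hkd _) (hC _)
      _ = (r * C) * r ^ n := by ring
  have hsum : Summable (fun n : ℕ => (r * C) * r ^ n) :=
    (summable_geometric_of_lt_one hr0 hA).mul_left _
  -- uniform convergence of the partial sums
  have hTU : TendstoUniformly
      (fun (N : ℕ) (z : EuclideanSpace ℝ (Fin d)) => ∑ n ∈ Finset.range N, g n z)
      (fun z => ∑' n, g n z) atTop :=
    tendstoUniformly_tsum_nat hsum hgbd
  set Φ : EuclideanSpace ℝ (Fin d) → EuclideanSpace ℝ (Fin k) :=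
    fun z => φ 0 z + ∑' n, g n z with hΦ
  -- constant-in-N part converges uniformly to itself
  have hTU0 : TendstoUniformly (fun (_ : ℕ) z => φ 0 z) (fun z => φ 0 z) atTop := by
    intro u hu
    filter_upwards with n x
    exact refl_mem_uniformity hu
  have hTUφ : TendstoUniformly φ Φ atTop := by
    have h := hTU0.add hTU
    have heq1 : ((fun (_ : ℕ) z => φ 0 z) + fun N z => ∑ n ∈ Finset.range N, g n z) = φ := by
      funext N z
      show φ 0 z + ∑ n ∈ Finset.range N, g n z = φ N z
      exact (htel N z).symm
    have heq2 : ((fun z => φ 0 z) + fun z => ∑' n, g n z) = Φ := rfl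
    rwa [heq1, heq2] at h
  -- continuity of F
  have hMcont : Continuous fun z : EuclideanSpace ℝ (Fin d) => toEuc d (M.mulVec z) := by
    have : (fun z : EuclideanSpace ℝ (Fin d) => toEuc d (M.mulVec z))
        = ⇑(Matrix.toEuclideanLin M) := rfl
    rw [this]
    exact LinearMap.continuous_of_finiteDimensional _
  have hFcont : Continuous F := by
    have : F = fun z : EuclideanSpace ℝ (Fin d) => toEuc d (M.mulVec z) + G z := funext hF
    rw [this]
    exact hMcont.add hGcont
  have hPcont : Continuous (projP d k hkd) := by
    obtain ⟨L, hL⟩ := projP_linear d k hkd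
    rw [← hL]
    exact LinearMap.continuous_of_finiteDimensional L
  have hφcont : ∀ n, Continuous (φ n) := fun n =>
    ((A.symm ^ n).continuous).comp (hPcont.comp (hFcont.iterate n))
  have hΦcont : Continuous Φ :=
    hTUφ.continuous (Eventually.of_forall hφcont).frequently
  refine ⟨Φ, fun z => hTUφ.tendsto_at z, hTUφ, hΦcont, ?_⟩
  -- conjugacy
  intro z
  have hshift : ∀ n, φ n (F z) = A (φ (n + 1) z) := by
    intro n
    have h2 : (A.symm ^ (n + 1)) (projP d k hkd (F^[n + 1] z))
        = A.symm ((A.symm ^ n) (projP d k hkd (F^[n + 1] z))) := by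
      rw [pow_succ']; rfl
    show (A.symm ^ n) (projP d k hkd (F^[n] (F z))) = A (φ (n + 1) z)
    rw [← Function.iterate_succ_apply F n z]
    show (A.symm ^ n) (projP d k hkd (F^[n + 1] z)) = _
    rw [show φ (n + 1) z = (A.symm ^ (n + 1)) (projP d k hkd (F^[n + 1] z)) from rfl,
      h2, A.apply_symm_apply]
  have h1 : Tendsto (fun n => φ n (F z)) atTop (𝓝 (Φ (F z))) := hTUφ.tendsto_at (F z)
  have h2 : Tendsto (fun n => A (φ (n + 1) z)) atTop (𝓝 (A (Φ z))) :=
    (A.continuous.tendsto _).comp ((hTUφ.tendsto_at z).comp (tendsto_add_atTop_nat 1))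
  have : (fun n => φ n (F z)) = fun n => A (φ (n + 1) z) := funext hshift
  rw [this] at h1
  exact tendsto_nhds_unique h1 h2
end
end

section
/- Let F̂(z) = Mz + G(z) be a lift of a torus map satisfying the expanding-block assumption, and let Φ̂(z) = lim_{n→∞} A^{−n} P(F̂^n(z)). Then for every z ∈ ℝ^d and every integer vector p ∈ ℤ^d, Φ̂(z + p) = Φ̂(z) + P p. Consequently Φ̂ descends to a well-defined map Φ between the quotients ℝ^d/ℤ^d and ℝ^k/ℤ^k. -/
open Filter Topology

noncomputable section

/-- The canonical projection `ℝ^n → ℝ^n/ℤ^n` (the `n`-torus), coordinatewise `mod 1`. -/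
def torusProj (n : ℕ) (z : EuclideanSpace ℝ (Fin n)) : Fin n → AddCircle (1 : ℝ) :=
  fun i => ((z i : ℝ) : AddCircle (1 : ℝ))

lemma symm_pow_cancel {k : ℕ} (A : EuclideanSpace ℝ (Fin k) ≃L[ℝ] EuclideanSpace ℝ (Fin k))
    (n : ℕ) (x : EuclideanSpace ℝ (Fin k)) : (A.symm ^ n) ((A ^ n) x) = x := by
  induction n generalizing x with
  | zero => rfl
  | succ n ih =>
    rw [pow_succ A, pow_succ' A.symm]
    have h1 : (A ^ n * A) x = (A ^ n) (A x) := rfl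
    have h2 : ∀ y, (A.symm * A.symm ^ n) y = A.symm ((A.symm ^ n) y) := fun _ => rfl
    rw [h1, h2, ih (A x)]
    simp

/--
Let `F̂(z) = Mz + G(z)` be a lift of a torus map satisfying the
expanding-block assumption, and let `Φ̂(z) = lim_{n→∞} A⁻ⁿ P(F̂ⁿ(z))`. Then for every
`z ∈ ℝ^d` and every integer vector `p ∈ ℤ^d`, `Φ̂(z + p) = Φ̂(z) + P p`. Consequently `Φ̂`
descends to a well-defined map `Φ` between the quotients `ℝ^d/ℤ^d` and `ℝ^k/ℤ^k`.
-/
theorem stmt2 (d k : ℕ) (hk : 1 ≤ k) (hkd : k ≤ d)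
    (M : Matrix (Fin d) (Fin d) ℝ) (hMint : ∀ i j, ∃ n : ℤ, M i j = (n : ℝ))
    (G : EuclideanSpace ℝ (Fin d) → EuclideanSpace ℝ (Fin d))
    (hGcont : Continuous G) (hGbdd : ∃ C, ∀ z, ‖G z‖ ≤ C)
    (hGper : ∀ (z : EuclideanSpace ℝ (Fin d)) (p : Fin d → ℤ),
      G (z + toEuc d fun i => (p i : ℝ)) = G z)
    (F : EuclideanSpace ℝ (Fin d) → EuclideanSpace ℝ (Fin d))
    (hF : ∀ z, F z = toEuc d (M.mulVec z) + G z)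
    (A : EuclideanSpace ℝ (Fin k) ≃L[ℝ] EuclideanSpace ℝ (Fin k))
    (hPM : ∀ z : EuclideanSpace ℝ (Fin d),
      projP d k hkd (toEuc d (M.mulVec z)) = A (projP d k hkd z))
    (hA : ‖(A.symm : EuclideanSpace ℝ (Fin k) →L[ℝ] EuclideanSpace ℝ (Fin k))‖ < 1)
    (Φ : EuclideanSpace ℝ (Fin d) → EuclideanSpace ℝ (Fin k))
    (hΦ : ∀ z, Tendsto (fun n : ℕ => (A.symm ^ n) (projP d k hkd (F^[n] z)))
      atTop (𝓝 (Φ z))) :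
    (∀ (z : EuclideanSpace ℝ (Fin d)) (p : Fin d → ℤ),
      Φ (z + toEuc d fun i => (p i : ℝ)) = Φ z + projP d k hkd (toEuc d fun i => (p i : ℝ))) ∧
    ∃ Φbar : (Fin d → AddCircle (1 : ℝ)) → (Fin k → AddCircle (1 : ℝ)),
      ∀ z : EuclideanSpace ℝ (Fin d), Φbar (torusProj d z) = torusProj k (Φ z) := by
  have mulVec_add' : ∀ (x y : EuclideanSpace ℝ (Fin d)),
      toEuc d (M.mulVec (x + y : EuclideanSpace ℝ (Fin d))) = toEuc d (M.mulVec x) + toEuc d (M.mulVec y) := by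
    intro x y; ext i
    show ∑ j, M i j * (x j + y j) = (∑ j, M i j * x j) + ∑ j, M i j * y j
    simp [mul_add, Finset.sum_add_distrib]
  have hint : ∀ q : Fin d → ℤ, ∃ q' : Fin d → ℤ,
      toEuc d (M.mulVec (toEuc d fun i => (q i : ℝ))) = toEuc d fun i => (q' i : ℝ) := by
    intro q
    refine ⟨fun i => ∑ j, (hMint i j).choose * q j, ?_⟩
    ext i
    show ∑ j, M i j * (q j : ℝ) = ((∑ j, (hMint i j).choose * q j : ℤ) : ℝ)
    rw [Int.cast_sum]
    refine Finset.sum_congr rfl fun j _ => ?_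
    push_cast
    exact congrArg (fun t : ℝ => t * (q j : ℝ)) (hMint i j).choose_spec
  have key : ∀ (z : EuclideanSpace ℝ (Fin d)) (p : Fin d → ℤ),
      Φ (z + toEuc d fun i => (p i : ℝ)) = Φ z + projP d k hkd (toEuc d fun i => (p i : ℝ)) := by
    intro z p
    have iter : ∀ n : ℕ, ∃ q : Fin d → ℤ,
        F^[n] (z + toEuc d fun i => (p i : ℝ)) = F^[n] z + toEuc d (fun i => (q i : ℝ)) ∧
        projP d k hkd (toEuc d fun i => (q i : ℝ)) =
          (A ^ n) (projP d k hkd (toEuc d fun i => (p i : ℝ))) := by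
      intro n
      induction n with
      | zero => exact ⟨p, rfl, rfl⟩
      | succ n ih =>
        obtain ⟨q, hq1, hq2⟩ := ih
        obtain ⟨q', hq'⟩ := hint q
        refine ⟨q', ?_, ?_⟩
        · rw [Function.iterate_succ_apply', Function.iterate_succ_apply', hq1, hF, hF,
            hGper _ q, mulVec_add', hq']
          abel
        · rw [← hq', hPM, hq2]
          have : (A ^ (n + 1)) = A * A ^ n := pow_succ' A n
          rw [this]
          rfl
    have hn : ∀ n : ℕ,
        (A.symm ^ n) (projP d k hkd (F^[n] (z + toEuc d fun i => (p i : ℝ))))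
          = (A.symm ^ n) (projP d k hkd (F^[n] z)) + projP d k hkd (toEuc d fun i => (p i : ℝ)) := by
      intro n
      obtain ⟨q, hq1, hq2⟩ := iter n
      rw [hq1, projP_add, map_add, hq2, symm_pow_cancel]
    have h1 := hΦ (z + toEuc d fun i => (p i : ℝ))
    rw [show (fun n : ℕ => (A.symm ^ n) (projP d k hkd (F^[n] (z + toEuc d fun i => (p i : ℝ)))))
        = fun n : ℕ => (A.symm ^ n) (projP d k hkd (F^[n] z))
            + projP d k hkd (toEuc d fun i => (p i : ℝ)) from funext hn] at h1
    have h2 := (hΦ z).add_const (projP d k hkd (toEuc d fun i => (p i : ℝ)))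
    exact tendsto_nhds_unique h1 h2
  refine ⟨key, ⟨fun w => torusProj k (Φ (toEuc d fun i => Quotient.out (w i))), ?_⟩⟩
  intro z
  have hz' : ∃ p : Fin d → ℤ,
      (toEuc d fun i => (Quotient.out (torusProj d z i))) = z + toEuc d fun i => (p i : ℝ) := by
    have h : ∀ i, ∃ m : ℤ, Quotient.out (torusProj d z i) - z i = (m : ℝ) := by
      intro i
      have hcoe : ((Quotient.out (torusProj d z i) : ℝ) : AddCircle (1 : ℝ)) = ((z i : ℝ) : AddCircle (1 : ℝ)) :=
        QuotientAddGroup.out_eq' ((z i : ℝ) : AddCircle (1 : ℝ))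
      have hmem : Quotient.out (torusProj d z i) - z i ∈ AddSubgroup.zmultiples (1 : ℝ) := by
        rwa [QuotientAddGroup.eq_iff_sub_mem] at hcoe
      obtain ⟨m, hm⟩ := AddSubgroup.mem_zmultiples_iff.mp hmem
      exact ⟨m, by simpa using hm.symm⟩
    choose p hp using h
    refine ⟨p, PiLp.ext fun i => ?_⟩
    have := hp i
    show Quotient.out (torusProj d z i) = z i + (p i : ℝ)
    linarith
  obtain ⟨p, hp⟩ := hz'
  show torusProj k (Φ (toEuc d fun i => (Quotient.out (torusProj d z i)))) = torusProj k (Φ z)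
  rw [hp, key z p]
  funext i
  show ((Φ z i + (p (Fin.castLE hkd i) : ℝ) : ℝ) : AddCircle (1 : ℝ)) = ((Φ z i : ℝ) : AddCircle (1 : ℝ))
  have h0 : (((p (Fin.castLE hkd i) : ℝ)) : AddCircle (1 : ℝ)) = 0 := by
    rw [AddCircle.coe_eq_zero_iff]
    exact ⟨p (Fin.castLE hkd i), by simp⟩
  rw [show ((Φ z i + (p (Fin.castLE hkd i) : ℝ) : ℝ) : AddCircle (1 : ℝ))
      = ((Φ z i : ℝ) : AddCircle (1 : ℝ)) + (((p (Fin.castLE hkd i) : ℝ)) : AddCircle (1 : ℝ)) from rfl,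
    h0, add_zero]
end
end

section
/- Let F̂: ℝ^d → ℝ^d be a bijective lift of a torus map, F̂(z) = Mz + G(z), with M invertible. Let P_s: ℝ^d → ℝ^s be a surjective linear map and A_s an s×s real matrix with P_s∘M = A_s∘P_s and operator norm ‖A_s‖ < 1. Then for every z ∈ ℝ^d the limit Φ̂_s(z) := lim_{n→∞} A_s^{n} P_s(F̂^{−n}(z)) exists, the convergence is uniform in z, Φ̂_s is continuous (provided F̂^{−1} is continuous), and Φ̂_s(F̂(z)) = A_s·Φ̂_s(z) for every z ∈ ℝ^d. -/
open Filter Topology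

noncomputable section

/--
Let `F̂ : ℝ^d → ℝ^d` be a bijective lift of a torus map,
`F̂(z) = Mz + G(z)`, with `M` invertible. Let `P_s : ℝ^d → ℝ^s` be a surjective linear map
and `A_s` an `s×s` real matrix with `P_s∘M = A_s∘P_s` and operator norm `‖A_s‖ < 1`. Then
for every `z ∈ ℝ^d` the limit `Φ̂_s(z) := lim_{n→∞} A_sⁿ P_s(F̂^{−n}(z))` exists, the
convergence is uniform in `z`, `Φ̂_s` is continuous (provided `F̂⁻¹` is continuous), and
`Φ̂_s(F̂(z)) = A_s·Φ̂_s(z)` for every `z ∈ ℝ^d`.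
-/
theorem stmt6 (d s : ℕ)
    (M : Matrix (Fin d) (Fin d) ℝ) (hMint : ∀ i j, ∃ n : ℤ, M i j = (n : ℝ))
    (hMinv : IsUnit M)
    (G : EuclideanSpace ℝ (Fin d) → EuclideanSpace ℝ (Fin d))
    (hGcont : Continuous G) (hGbdd : ∃ C, ∀ z, ‖G z‖ ≤ C)
    (hGper : ∀ (z : EuclideanSpace ℝ (Fin d)) (p : Fin d → ℤ),
      G (z + toEuc d fun i => (p i : ℝ)) = G z)
    (F : EuclideanSpace ℝ (Fin d) → EuclideanSpace ℝ (Fin d))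
    (hF : ∀ z, F z = toEuc d (M.mulVec z) + G z)
    (hFbij : Function.Bijective F)
    (Finv : EuclideanSpace ℝ (Fin d) → EuclideanSpace ℝ (Fin d))
    (hFinv : Function.LeftInverse Finv F ∧ Function.RightInverse Finv F)
    (Ps : EuclideanSpace ℝ (Fin d) →L[ℝ] EuclideanSpace ℝ (Fin s))
    (hPs : Function.Surjective Ps)
    (As : EuclideanSpace ℝ (Fin s) →L[ℝ] EuclideanSpace ℝ (Fin s))
    (hPsM : ∀ z : EuclideanSpace ℝ (Fin d), Ps (toEuc d (M.mulVec z)) = As (Ps z))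
    (hAs : ‖As‖ < 1) :
    ∃ Φs : EuclideanSpace ℝ (Fin d) → EuclideanSpace ℝ (Fin s),
      (∀ z, Tendsto (fun n : ℕ => (As ^ n) (Ps (Finv^[n] z))) atTop (𝓝 (Φs z))) ∧
      TendstoUniformly (fun (n : ℕ) (z : EuclideanSpace ℝ (Fin d)) =>
        (As ^ n) (Ps (Finv^[n] z))) Φs atTop ∧
      (Continuous Finv → Continuous Φs) ∧
      (∀ z, Φs (F z) = As (Φs z)) := by
  obtain ⟨C, hC⟩ := hGbdd
  obtain ⟨hL, hR⟩ := hFinv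
  set g : ℕ → EuclideanSpace ℝ (Fin d) → EuclideanSpace ℝ (Fin s) :=
    fun n z => (As ^ n) (Ps (Finv^[n] z)) with hg
  have hpow : ∀ n : ℕ, ‖As ^ n‖ ≤ ‖As‖ ^ n := by
    intro n
    induction n with
    | zero => rw [pow_zero, pow_zero, ContinuousLinearMap.one_def]; exact ContinuousLinearMap.norm_id_le
    | succ n ih =>
      calc ‖As ^ (n+1)‖ = ‖As ^ n * As‖ := by rw [pow_succ]
        _ ≤ ‖As ^ n‖ * ‖As‖ := norm_mul_le _ _
        _ ≤ ‖As‖ ^ n * ‖As‖ := by gcongr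
        _ = ‖As‖ ^ (n+1) := (pow_succ _ _).symm
  have key : ∀ n z, g n z = g (n+1) z + (As ^ n) (Ps (G (Finv^[n+1] z))) := by
    intro n z
    have h1 : F (Finv^[n+1] z) = Finv^[n] z := by
      rw [Function.iterate_succ_apply']
      exact hR _
    have h2 : Ps (Finv^[n] z) = As (Ps (Finv^[n+1] z)) + Ps (G (Finv^[n+1] z)) := by
      rw [← h1, hF, map_add, hPsM]
    simp only [hg, h2, map_add, pow_succ, ContinuousLinearMap.mul_apply]
  have hbound : ∀ z n, dist (g n z) (g (n+1) z) ≤ (‖Ps‖ * C) * ‖As‖ ^ n := by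
    intro z n
    rw [dist_eq_norm, key n z, add_sub_cancel_left]
    calc ‖(As ^ n) (Ps (G (Finv^[n+1] z)))‖
        ≤ ‖As ^ n‖ * ‖Ps (G (Finv^[n+1] z))‖ := ContinuousLinearMap.le_opNorm _ _
      _ ≤ ‖As‖ ^ n * (‖Ps‖ * C) := by
          gcongr
          · exact hpow n
          · calc ‖Ps (G (Finv^[n+1] z))‖ ≤ ‖Ps‖ * ‖G (Finv^[n+1] z)‖ :=
                ContinuousLinearMap.le_opNorm _ _
              _ ≤ ‖Ps‖ * C := by
                  have := hC (Finv^[n+1] z)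
                  have h0 : (0:ℝ) ≤ ‖Ps‖ := norm_nonneg _
                  nlinarith [norm_nonneg (G (Finv^[n+1] z))]
      _ = (‖Ps‖ * C) * ‖As‖ ^ n := mul_comm _ _
  have hcauchy : ∀ z, ∃ L, Tendsto (fun n => g n z) atTop (𝓝 L) := fun z =>
    cauchySeq_tendsto_of_complete (cauchySeq_of_le_geometric ‖As‖ (‖Ps‖ * C) hAs (hbound z))
  set Φ : EuclideanSpace ℝ (Fin d) → EuclideanSpace ℝ (Fin s) :=
    fun z => (hcauchy z).choose with hΦdef
  have hΦ : ∀ z, Tendsto (fun n => g n z) atTop (𝓝 (Φ z)) := fun z => (hcauchy z).choose_spec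
  have hdist : ∀ z n, dist (g n z) (Φ z) ≤ (‖Ps‖ * C) * ‖As‖ ^ n / (1 - ‖As‖) := by
    intro z n
    exact dist_le_of_le_geometric_of_tendsto ‖As‖ (‖Ps‖ * C) hAs (hbound z) (hΦ z) n
  have hb : Tendsto (fun n : ℕ => (‖Ps‖ * C) * ‖As‖ ^ n / (1 - ‖As‖)) atTop (𝓝 0) := by
    have h1 : Tendsto (fun n : ℕ => ‖As‖ ^ n) atTop (𝓝 0) :=
      tendsto_pow_atTop_nhds_zero_of_lt_one (norm_nonneg _) hAs
    have h2 := (h1.const_mul (‖Ps‖ * C)).div_const (1 - ‖As‖)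
    simpa only [mul_zero, zero_div] using h2
  have hunif : TendstoUniformly g Φ atTop := by
    rw [Metric.tendstoUniformly_iff]
    intro ε hε
    filter_upwards [hb.eventually_lt_const hε] with n hn x
    calc dist (Φ x) (g n x) = dist (g n x) (Φ x) := dist_comm _ _
      _ ≤ (‖Ps‖ * C) * ‖As‖ ^ n / (1 - ‖As‖) := hdist x n
      _ < ε := hn
  refine ⟨Φ, hΦ, hunif, ?_, ?_⟩
  · intro hFc
    exact hunif.continuous (Filter.Frequently.of_forall fun n =>
      (As ^ n).continuous.comp (Ps.continuous.comp (hFc.iterate n)))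
  · intro z
    have h3 : ∀ n, g (n+1) (F z) = As (g n z) := by
      intro n
      have hnz : Finv^[n+1] (F z) = Finv^[n] z := by
        rw [Function.iterate_succ_apply, hL z]
      simp [hg, hnz, pow_succ', ContinuousLinearMap.mul_apply]
      exact (Function.Commute.iterate_self _ n).eq _
    have h2 : Tendsto (fun n => g (n+1) (F z)) atTop (𝓝 (Φ (F z))) :=
      (hΦ (F z)).comp (tendsto_add_atTop_nat 1)
    have h4 : Tendsto (fun n => As (g n z)) atTop (𝓝 (As (Φ z))) :=
      (As.continuous.tendsto _).comp (hΦ z)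
    exact tendsto_nhds_unique h2 (by simpa [h3] using h4)
end
end

section
/- Let F̂(z) = Mz + G(z) be a lift of a torus map. Suppose v ∈ ℤ^d is a nonzero integer vector and m an integer with |m| > 1 such that vᵀM = m·vᵀ (v is an integer left eigenvector of M with eigenvalue m). Then for every z ∈ ℝ^d the limit φ̂(z) := lim_{n→∞} m^{−n} (v · F̂^{n}(z)) exists, φ̂: ℝ^d → ℝ is continuous and onto, φ̂(F̂(z)) = m·φ̂(z) for all z, and φ̂(z + p) = φ̂(z) + v·p for all z ∈ ℝ^d and p ∈ ℤ^d. Hence F̂ descends to a torus map on ℝ^d/ℤ^d semi-conjugate to the expanding circle map x ↦ mx mod 1. -/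
open Filter Topology

noncomputable section

set_option maxHeartbeats 1000000

/--
Let `F̂(z) = Mz + G(z)` be a lift of a torus map. Suppose `v ∈ ℤ^d` is a
nonzero integer vector and `m` an integer with `|m| > 1` such that `vᵀM = m·vᵀ`. Then for
every `z ∈ ℝ^d` the limit `φ̂(z) := lim_{n→∞} m^{−n} (v · F̂ⁿ(z))` exists, `φ̂ : ℝ^d → ℝ`
is continuous and onto, `φ̂(F̂(z)) = m·φ̂(z)` for all `z`, and `φ̂(z + p) = φ̂(z) + v·p` for
all `z ∈ ℝ^d`, `p ∈ ℤ^d`. Hence `F̂` descends to a torus map on `ℝ^d/ℤ^d` semi-conjugate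
to the expanding circle map `x ↦ mx mod 1`.
-/
theorem stmt8 (d : ℕ)
    (M : Matrix (Fin d) (Fin d) ℝ) (hMint : ∀ i j, ∃ n : ℤ, M i j = (n : ℝ))
    (G : EuclideanSpace ℝ (Fin d) → EuclideanSpace ℝ (Fin d))
    (hGcont : Continuous G) (hGbdd : ∃ C, ∀ z, ‖G z‖ ≤ C)
    (hGper : ∀ (z : EuclideanSpace ℝ (Fin d)) (p : Fin d → ℤ),
      G (z + toEuc d fun i => (p i : ℝ)) = G z)
    (F : EuclideanSpace ℝ (Fin d) → EuclideanSpace ℝ (Fin d))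
    (hF : ∀ z, F z = toEuc d (M.mulVec z) + G z)
    (v : Fin d → ℤ) (hv : v ≠ 0) (m : ℤ) (hm : 1 < |m|)
    (hvM : ∀ j, ∑ i, (v i : ℝ) * M i j = (m : ℝ) * (v j : ℝ)) :
    ∃ φ : EuclideanSpace ℝ (Fin d) → ℝ,
      (∀ z, Tendsto (fun n : ℕ =>
          ((m : ℝ) ^ n)⁻¹ * ∑ i, (v i : ℝ) * (F^[n] z) i) atTop (𝓝 (φ z))) ∧
      Continuous φ ∧ Function.Surjective φ ∧
      (∀ z, φ (F z) = (m : ℝ) * φ z) ∧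
      (∀ (z : EuclideanSpace ℝ (Fin d)) (p : Fin d → ℤ),
        φ (z + toEuc d fun i => (p i : ℝ)) = φ z + ∑ i, (v i : ℝ) * (p i : ℝ)) ∧
      -- hence `F̂` descends to a torus map semi-conjugate to `x ↦ mx mod 1`:
      ∃ (Fbar : (Fin d → AddCircle (1 : ℝ)) → (Fin d → AddCircle (1 : ℝ)))
        (φbar : (Fin d → AddCircle (1 : ℝ)) → AddCircle (1 : ℝ)),
        (∀ z, Fbar (torusProj d z) = torusProj d (F z)) ∧
        (∀ z, φbar (torusProj d z) = ((φ z : ℝ) : AddCircle (1 : ℝ))) ∧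
        (∀ θ, φbar (Fbar θ) = m • φbar θ) := by
  classical
  obtain ⟨C, hC⟩ := hGbdd
  have hC0 : 0 ≤ C := le_trans (norm_nonneg _) (hC 0)
  set ψ : EuclideanSpace ℝ (Fin d) → ℝ := fun z => ∑ i, (v i : ℝ) * z i with hψdef
  have hmR : (1:ℝ) < |(m:ℝ)| := by exact_mod_cast hm
  have hm0 : (m:ℝ) ≠ 0 := by
    intro h; rw [h] at hmR; simp at hmR; linarith
  have hpow : ∀ n : ℕ, ((m:ℝ))^n ≠ 0 := fun n => pow_ne_zero n hm0
  -- basic facts about ψ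
  have hψadd : ∀ x y, ψ (x + y) = ψ x + ψ y := by
    intro x y
    simp only [hψdef]
    rw [← Finset.sum_add_distrib]
    refine Finset.sum_congr rfl fun i _ => ?_
    have h : (x + y) i = x i + y i := rfl
    rw [h]; ring
  have hψcont : Continuous ψ := by
    refine continuous_finset_sum _ fun i _ => ?_
    exact continuous_const.mul (EuclideanSpace.proj i).continuous
  set V : ℝ := ∑ i, |(v i:ℝ)| with hVdef
  have hV0 : 0 ≤ V := Finset.sum_nonneg fun i _ => abs_nonneg _
  have hcoord : ∀ (w : EuclideanSpace ℝ (Fin d)) i, |w i| ≤ ‖w‖ := by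
    intro w i
    rw [EuclideanSpace.norm_eq, ← Real.sqrt_sq_eq_abs]
    apply Real.sqrt_le_sqrt
    have := Finset.single_le_sum (f := fun j => ‖w j‖^2) (fun j _ => sq_nonneg _)
      (Finset.mem_univ i)
    simpa [Real.norm_eq_abs, sq_abs] using this
  have hψbound : ∀ w, |ψ w| ≤ V * ‖w‖ := by
    intro w
    calc |ψ w| ≤ ∑ i, |(v i:ℝ) * w i| := Finset.abs_sum_le_sum_abs _ _
      _ ≤ ∑ i, |(v i:ℝ)| * ‖w‖ := Finset.sum_le_sum fun i _ => by
            rw [abs_mul]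
            exact mul_le_mul_of_nonneg_left (hcoord w i) (abs_nonneg _)
      _ = V * ‖w‖ := by rw [hVdef, Finset.sum_mul]
  -- key eigenvector identity
  have hA : ∀ z : EuclideanSpace ℝ (Fin d), ψ (toEuc d (M.mulVec z)) = (m:ℝ) * ψ z := by
    intro z
    simp only [hψdef]
    show ∑ i, (v i:ℝ) * (M.mulVec z) i = (m:ℝ) * ∑ i, (v i:ℝ) * z i
    simp only [Matrix.mulVec, dotProduct]
    calc ∑ i, (v i:ℝ) * ∑ j, M i j * z j
        = ∑ i, ∑ j, (v i:ℝ) * M i j * z j := by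
          simp_rw [Finset.mul_sum, mul_assoc]
      _ = ∑ j, ∑ i, (v i:ℝ) * M i j * z j := Finset.sum_comm
      _ = ∑ j, (∑ i, (v i:ℝ) * M i j) * z j := by simp_rw [Finset.sum_mul]
      _ = ∑ j, ((m:ℝ) * (v j:ℝ)) * z j := by simp_rw [hvM]
      _ = (m:ℝ) * ∑ j, (v j:ℝ) * z j := by
          rw [Finset.mul_sum]; simp_rw [mul_assoc]
  have hFeq : ∀ z, ψ (F z) = (m:ℝ) * ψ z + ψ (G z) := by
    intro z; rw [hF, hψadd, hA]
  -- continuity of F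
  have hFcont : Continuous F := by
    have h1 : (fun z : EuclideanSpace ℝ (Fin d) => toEuc d (M.mulVec z))
        = fun z => Matrix.toEuclideanLin M z := by funext z; rfl
    have h2 : Continuous fun z : EuclideanSpace ℝ (Fin d) => toEuc d (M.mulVec z) := by
      rw [h1]; exact (Matrix.toEuclideanLin M).continuous_of_finiteDimensional
    have h3 : F = fun z : EuclideanSpace ℝ (Fin d) => toEuc d (M.mulVec z) + G z := funext hF
    rw [h3]; exact h2.add hGcont
  -- the series defining φ
  set g : ℕ → EuclideanSpace ℝ (Fin d) → ℝ :=
    fun k z => ((m:ℝ)^(k+1))⁻¹ * ψ (G (F^[k] z)) with hgdef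
  set u : ℕ → ℝ := fun k => (V * C * |(m:ℝ)|⁻¹) * (|(m:ℝ)|⁻¹)^k with hudef
  have hgu : ∀ k z, ‖g k z‖ ≤ u k := by
    intro k z
    simp only [hgdef, hudef]
    rw [Real.norm_eq_abs, abs_mul, abs_inv, abs_pow]
    have h1 : |ψ (G (F^[k] z))| ≤ V * C :=
      le_trans (hψbound _) (mul_le_mul_of_nonneg_left (hC _) hV0)
    have h2 : (|(m:ℝ)|^(k+1))⁻¹ = |(m:ℝ)|⁻¹ * (|(m:ℝ)|⁻¹)^k := by
      rw [pow_succ, mul_inv, inv_pow]; ring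
    rw [h2]
    have h3 : 0 ≤ |(m:ℝ)|⁻¹ * (|(m:ℝ)|⁻¹)^k := by positivity
    calc (|(m:ℝ)|⁻¹ * (|(m:ℝ)|⁻¹)^k) * |ψ (G (F^[k] z))|
        ≤ (|(m:ℝ)|⁻¹ * (|(m:ℝ)|⁻¹)^k) * (V * C) := mul_le_mul_of_nonneg_left h1 h3
      _ = (V * C * |(m:ℝ)|⁻¹) * (|(m:ℝ)|⁻¹)^k := by ring
  have hru : |(m:ℝ)|⁻¹ < 1 := inv_lt_one_of_one_lt₀ hmR
  have hru0 : (0:ℝ) ≤ |(m:ℝ)|⁻¹ := by positivity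
  have hus : Summable u := by
    rw [hudef]
    exact (summable_geometric_of_lt_one hru0 hru).mul_left _
  have hgs : ∀ z, Summable fun k => g k z := fun z =>
    Summable.of_norm_bounded hus fun k => hgu k z
  set φ : EuclideanSpace ℝ (Fin d) → ℝ := fun z => ψ z + ∑' k, g k z with hφdef
  -- partial sum identity
  have hpart : ∀ (z) (n : ℕ),
      ((m:ℝ)^n)⁻¹ * ψ (F^[n] z) = ψ z + ∑ k ∈ Finset.range n, g k z := by
    intro z n
    induction n with
    | zero => simp
    | succ n ih =>
      rw [Function.iterate_succ_apply', Finset.sum_range_succ, ← add_assoc, ← ih, hFeq]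
      simp only [hgdef]
      field_simp
      ring
  have hLim : ∀ z, Tendsto (fun n : ℕ => ((m:ℝ)^n)⁻¹ * ψ (F^[n] z)) atTop (𝓝 (φ z)) := by
    intro z
    have h1 := (hgs z).hasSum.tendsto_sum_nat
    have h2 := h1.const_add (ψ z)
    exact h2.congr fun n => (hpart z n).symm
  -- continuity of φ
  have hφcont : Continuous φ := by
    rw [hφdef]
    refine hψcont.add ?_
    refine continuous_tsum (fun k => ?_) hus fun k z => hgu k z
    exact continuous_const.mul (hψcont.comp (hGcont.comp (hFcont.iterate k)))
  -- φ(Fz) = m φ(z)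
  have hφF : ∀ z, φ (F z) = (m:ℝ) * φ z := by
    intro z
    have h1 := hLim (F z)
    have h3 : Tendsto (fun n : ℕ => ((m:ℝ)^(n+1))⁻¹ * ψ (F^[n+1] z)) atTop (𝓝 (φ z)) :=
      (hLim z).comp (tendsto_add_atTop_nat 1)
    have h4 := h3.const_mul ((m:ℝ))
    have h2 : Tendsto (fun n : ℕ => ((m:ℝ)^n)⁻¹ * ψ (F^[n] (F z))) atTop
        (𝓝 ((m:ℝ) * φ z)) := by
      refine h4.congr fun n => ?_
      rw [← Function.iterate_succ_apply]
      field_simp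
      ring
    exact tendsto_nhds_unique h1 h2
  -- integer matrix
  choose N hN using hMint
  have hmvi : ∀ (p : Fin d → ℤ) i,
      M.mulVec (toEuc d fun j => (p j:ℝ)) i = ((∑ j, N i j * p j : ℤ) : ℝ) := by
    intro p i
    simp only [Matrix.mulVec, dotProduct]
    push_cast
    exact Finset.sum_congr rfl fun j _ => by simp only [hN, toEuc]
  have hFp : ∀ (z : EuclideanSpace ℝ (Fin d)) (p : Fin d → ℤ),
      F (z + toEuc d fun i => (p i:ℝ))
        = F z + toEuc d fun i => ((∑ j, N i j * p j : ℤ) : ℝ) := by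
    intro z p
    ext i
    rw [hF, hF, hGper]
    show (M.mulVec (z + toEuc d fun i => (p i:ℝ))) i + G z i
        = ((M.mulVec z) i + G z i) + ((∑ j, N i j * p j : ℤ) : ℝ)
    have key : (M.mulVec (z + toEuc d fun i => (p i:ℝ))) i
        = (M.mulVec z) i + ((∑ j, N i j * p j : ℤ) : ℝ) := by
      rw [← hmvi p i]
      rw [Matrix.mulVec_add]
      rfl
    rw [key]; ring
  have hNψ : ∀ p : Fin d → ℤ,
      ψ (toEuc d fun i => ((∑ j, N i j * p j : ℤ) : ℝ))
        = (m:ℝ) * ψ (toEuc d fun i => (p i:ℝ)) := by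
    intro p
    have h1 : (toEuc d fun i => ((∑ j, N i j * p j : ℤ) : ℝ))
        = toEuc d (M.mulVec (toEuc d fun i => (p i:ℝ))) := by
      ext i; exact (hmvi p i).symm
    rw [h1, hA]
  have hiter : ∀ (n : ℕ) (z : EuclideanSpace ℝ (Fin d)) (p : Fin d → ℤ),
      ∃ q : Fin d → ℤ,
        F^[n] (z + toEuc d fun i => (p i:ℝ)) = F^[n] z + (toEuc d fun i => (q i:ℝ)) ∧
        ψ (toEuc d fun i => (q i:ℝ)) = (m:ℝ)^n * ψ (toEuc d fun i => (p i:ℝ)) := by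
    intro n
    induction n with
    | zero => intro z p; exact ⟨p, rfl, by simp⟩
    | succ n ih =>
      intro z p
      obtain ⟨q, hq1, hq2⟩ := ih z p
      refine ⟨fun i => ∑ j, N i j * q j, ?_, ?_⟩
      · rw [Function.iterate_succ_apply', hq1, hFp, Function.iterate_succ_apply']
      · rw [hNψ, hq2, pow_succ]; ring
  -- periodicity of φ
  have hφper : ∀ (z : EuclideanSpace ℝ (Fin d)) (p : Fin d → ℤ),
      φ (z + toEuc d fun i => (p i:ℝ)) = φ z + ψ (toEuc d fun i => (p i:ℝ)) := by
    intro z p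
    have h1 := hLim (z + toEuc d fun i => (p i:ℝ))
    have h2 : Tendsto (fun n : ℕ => ((m:ℝ)^n)⁻¹ * ψ (F^[n] (z + toEuc d fun i => (p i:ℝ))))
        atTop (𝓝 (φ z + ψ (toEuc d fun i => (p i:ℝ)))) := by
      have h3 := (hLim z).add_const (ψ (toEuc d fun i => (p i:ℝ)))
      refine h3.congr fun n => ?_
      obtain ⟨q, hq1, hq2⟩ := hiter n z p
      rw [hq1, hψadd, hq2]
      field_simp
    exact tendsto_nhds_unique h1 h2
  -- surjectivity
  have hφsurj : Function.Surjective φ := by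
    obtain ⟨j, hj⟩ : ∃ j, v j ≠ 0 := by
      by_contra h; push_neg at h; exact hv (funext h)
    set e : EuclideanSpace ℝ (Fin d) := toEuc d (fun i => if i = j then 1 else 0) with hedef
    have hcont : Continuous fun t : ℝ => φ (t • e) :=
      hφcont.comp (continuous_id.smul continuous_const)
    have hb : (1:ℝ) ≤ |(v j:ℝ)| := by
      have : (1:ℤ) ≤ |v j| := Int.one_le_abs hj
      exact_mod_cast this
    have hval : ∀ k : ℤ, φ ((k:ℝ) • e) = φ 0 + (v j : ℝ) * (k:ℝ) := by
      intro k
      have h1 : (k:ℝ) • e = 0 + toEuc d (fun i => ((if i = j then k else 0 : ℤ) : ℝ)) := by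
        ext i
        show (k:ℝ) * (if i = j then (1:ℝ) else 0)
            = 0 + ((if i = j then k else 0 : ℤ) : ℝ)
        by_cases h : i = j <;> simp [h]
      have h2 : ψ (toEuc d fun i => ((if i = j then k else 0 : ℤ) : ℝ))
          = (v j:ℝ) * (k:ℝ) := by
        simp only [hψdef]
        show (∑ i, (v i:ℝ) * ((if i = j then k else 0 : ℤ) : ℝ)) = (v j:ℝ) * (k:ℝ)
        rw [Finset.sum_eq_single j]
        · simp
        · intro i _ hij; simp [hij]
        · intro h; exact absurd (Finset.mem_univ j) h
      rw [h1, hφper, h2]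
    intro w
    obtain ⟨n, hn⟩ := exists_nat_ge |w - φ 0|
    have hcn : φ ((n:ℝ) • e) = φ 0 + (v j:ℝ) * (n:ℝ) := by
      have := hval (n:ℤ); push_cast at this; exact this
    have hcmn : φ ((-(n:ℝ)) • e) = φ 0 + (v j:ℝ) * (-(n:ℝ)) := by
      have := hval (-(n:ℤ)); push_cast at this; exact this
    have h2 := abs_le.mp hn
    have hn0 : (0:ℝ) ≤ (n:ℝ) := Nat.cast_nonneg n
    rcases lt_or_gt_of_ne hj with hneg | hpos
    · have hbneg : (v j:ℝ) ≤ -1 := by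
        have : v j ≤ -1 := by omega
        exact_mod_cast this
      have hw : w ∈ Set.Icc (φ ((n:ℝ) • e)) (φ ((-(n:ℝ)) • e)) := by
        rw [Set.mem_Icc, hcn, hcmn]
        constructor <;> nlinarith [h2.1, h2.2]
      obtain ⟨t, ht⟩ := intermediate_value_univ ((n:ℝ)) (-(n:ℝ)) hcont hw
      exact ⟨t • e, ht⟩
    · have hbpos : (1:ℝ) ≤ (v j:ℝ) := by
        have : (1:ℤ) ≤ v j := hpos
        exact_mod_cast this
      have hw : w ∈ Set.Icc (φ ((-(n:ℝ)) • e)) (φ ((n:ℝ) • e)) := by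
        rw [Set.mem_Icc, hcn, hcmn]
        constructor <;> nlinarith [h2.1, h2.2]
      obtain ⟨t, ht⟩ := intermediate_value_univ (-(n:ℝ)) ((n:ℝ)) hcont hw
      exact ⟨t • e, ht⟩
  -- the quotient structure
  have hsurj1 : Function.Surjective (fun x : ℝ => (x : AddCircle (1:ℝ))) :=
    QuotientAddGroup.mk_surjective
  set σ : AddCircle (1:ℝ) → ℝ := Function.surjInv hsurj1 with hσdef
  have hσsec : ∀ x : AddCircle (1:ℝ), ((σ x : ℝ) : AddCircle (1:ℝ)) = x := fun x =>
    Function.surjInv_eq hsurj1 x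
  set lift : (Fin d → AddCircle (1:ℝ)) → EuclideanSpace ℝ (Fin d) :=
    fun θ => toEuc d (fun i => σ (θ i)) with hliftdef
  have hint0 : ∀ (x : ℝ) (k : ℤ), ((x + (k:ℝ) : ℝ) : AddCircle (1:ℝ)) = (x : AddCircle (1:ℝ)) := by
    intro x k
    rw [AddCircle.coe_add]
    have h : (((k:ℝ)) : AddCircle (1:ℝ)) = 0 := by
      rw [AddCircle.coe_eq_zero_iff]; exact ⟨k, by simp⟩
    rw [h, add_zero]
  have hrep : ∀ z : EuclideanSpace ℝ (Fin d),
      ∃ p : Fin d → ℤ, lift (torusProj d z) = z + toEuc d fun i => (p i : ℝ) := by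
    intro z
    have h1 : ∀ i, ∃ k : ℤ, σ (torusProj d z i) = z i + (k:ℝ) := by
      intro i
      have h2 : ((σ (torusProj d z i) : ℝ) : AddCircle (1:ℝ)) = ((z i : ℝ) : AddCircle (1:ℝ)) :=
        hσsec _
      obtain ⟨k, hk⟩ := AddSubgroup.mem_zmultiples_iff.mp ((QuotientAddGroup.eq).mp h2)
      refine ⟨-k, ?_⟩
      have hk' : (k:ℝ) = -(σ (torusProj d z i)) + z i := by
        simpa [zsmul_eq_mul] using hk
      push_cast
      linarith
    choose p hp using h1
    refine ⟨p, ?_⟩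
    ext i
    exact hp i
  have hproj : ∀ (z : EuclideanSpace ℝ (Fin d)) (p : Fin d → ℤ),
      torusProj d (z + toEuc d fun i => (p i:ℝ)) = torusProj d z := by
    intro z p
    funext i
    show (((z + toEuc d fun i => (p i:ℝ)) i : ℝ) : AddCircle (1:ℝ)) = _
    have h : (z + toEuc d fun i => (p i:ℝ)) i = z i + (p i : ℝ) := rfl
    rw [h]
    exact hint0 _ _
  have hφcoe : ∀ (z : EuclideanSpace ℝ (Fin d)) (p : Fin d → ℤ),
      ((φ (z + toEuc d fun i => (p i:ℝ)) : ℝ) : AddCircle (1:ℝ))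
        = ((φ z : ℝ) : AddCircle (1:ℝ)) := by
    intro z p
    rw [hφper]
    have h : ψ (toEuc d fun i => (p i:ℝ)) = ((∑ i, v i * p i : ℤ) : ℝ) := by
      simp only [hψdef]
      show (∑ i, (v i:ℝ) * (p i:ℝ)) = ((∑ i, v i * p i : ℤ) : ℝ)
      push_cast
      rfl
    rw [h]
    exact hint0 _ _
  refine ⟨φ, fun z => hLim z, hφcont, hφsurj, hφF, fun z p => hφper z p, ?_⟩
  refine ⟨fun θ => torusProj d (F (lift θ)),
    fun θ => ((φ (lift θ) : ℝ) : AddCircle (1:ℝ)), ?_, ?_, ?_⟩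
  · intro z
    show torusProj d (F (lift (torusProj d z))) = torusProj d (F z)
    obtain ⟨p, hp⟩ := hrep z
    rw [hp, hFp, hproj]
  · intro z
    show ((φ (lift (torusProj d z)) : ℝ) : AddCircle (1:ℝ)) = ((φ z : ℝ) : AddCircle (1:ℝ))
    obtain ⟨p, hp⟩ := hrep z
    rw [hp]
    exact hφcoe z p
  · intro θ
    show ((φ (lift (torusProj d (F (lift θ)))) : ℝ) : AddCircle (1:ℝ))
        = m • ((φ (lift θ) : ℝ) : AddCircle (1:ℝ))
    have h1 : ((φ (lift (torusProj d (F (lift θ)))) : ℝ) : AddCircle (1:ℝ))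
        = ((φ (F (lift θ)) : ℝ) : AddCircle (1:ℝ)) := by
      obtain ⟨p, hp⟩ := hrep (F (lift θ))
      rw [hp]
      exact hφcoe _ p
    rw [h1, hφF, ← zsmul_eq_mul, AddCircle.coe_zsmul]
end
end

section
/- Let F̂(z) = Mz + G(z) be a C¹ lift of a torus map with G of class C¹, satisfying the expanding-block assumption with k = 1 (so P(z) = z₁, P∘M = m·P for an integer m with |m| > 1), and admitting an invariant expanding cone structure with constants α > 0 and K > 1 centered on the first coordinate direction. Let Φ̂(z) = lim_{n→∞} m^{−n} P(F̂^n(z)). Then no two distinct points in the same fiber of Φ̂ can be connected by a conic curve: if γ: [0,1] → ℝ^d is a conic C¹ curve with γ(0) ≠ γ(1), then Φ̂(γ(0)) ≠ Φ̂(γ(1)). -/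
open Filter Topology

noncomputable section

/-- Projection onto the last `d - k` coordinates of `ℝ^d`. -/
def projQ (d k : ℕ) (h : k ≤ d) (z : EuclideanSpace ℝ (Fin d)) :
    EuclideanSpace ℝ (Fin (d - k)) :=
  WithLp.toLp 2 (fun j : Fin (d - k) => z ⟨k + j.val, by have := j.isLt; omega⟩)

/-- Auxiliary: iterated pushforward of the tangent vector field along the curve. -/
def vseq (d : ℕ) (F : EuclideanSpace ℝ (Fin d) → EuclideanSpace ℝ (Fin d))
    (γ γ' : ℝ → EuclideanSpace ℝ (Fin d)) : ℕ → ℝ → EuclideanSpace ℝ (Fin d)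
  | 0 => γ'
  | n + 1 => fun t => fderiv ℝ F (F^[n] (γ t)) (vseq d F γ γ' n t)

/--
Let `F̂(z) = Mz + G(z)` be a C¹ lift of a torus map with `G` of class
C¹, satisfying the expanding-block assumption with `k = 1` (so `P(z) = z₁`,
`P∘M = m·P` for an integer `m` with `|m| > 1`), and admitting an invariant expanding cone
structure with constants `α > 0` and `K > 1` centered on the first coordinate direction.
Let `Φ̂(z) = lim_{n→∞} m^{−n} P(F̂ⁿ(z))`. Then no two distinct points in the same fiber of
`Φ̂` can be connected by a conic curve: if `γ : [0,1] → ℝ^d` is a conic C¹ curve with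
`γ(0) ≠ γ(1)`, then `Φ̂(γ(0)) ≠ Φ̂(γ(1))`.
-/
theorem stmt13 (d : ℕ) (hd : 0 < d)
    (M : Matrix (Fin d) (Fin d) ℝ) (hMint : ∀ i j, ∃ n : ℤ, M i j = (n : ℝ))
    (G : EuclideanSpace ℝ (Fin d) → EuclideanSpace ℝ (Fin d))
    (hGC1 : ContDiff ℝ 1 G) (hGbdd : ∃ C, ∀ z, ‖G z‖ ≤ C)
    (hGper : ∀ (z : EuclideanSpace ℝ (Fin d)) (p : Fin d → ℤ),
      G (z + toEuc d fun i => (p i : ℝ)) = G z)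
    (F : EuclideanSpace ℝ (Fin d) → EuclideanSpace ℝ (Fin d))
    (hF : ∀ z, F z = toEuc d (M.mulVec z) + G z)
    (m : ℤ) (hm : 1 < |m|)
    (hPM : ∀ z : EuclideanSpace ℝ (Fin d),
      toEuc d (M.mulVec z) ⟨0, hd⟩ = (m : ℝ) * z ⟨0, hd⟩)
    (α K : ℝ) (hα : 0 < α) (hK : 1 < K)
    (hcone : ∀ (z v : EuclideanSpace ℝ (Fin d)),
      ‖projQ d 1 hd v‖ ≤ α * |v ⟨0, hd⟩| →
        ‖projQ d 1 hd (fderiv ℝ F z v)‖ ≤ α * |(fderiv ℝ F z v) ⟨0, hd⟩| ∧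
        K * |v ⟨0, hd⟩| ≤ |(fderiv ℝ F z v) ⟨0, hd⟩|)
    (Φ : EuclideanSpace ℝ (Fin d) → ℝ)
    (hΦ : ∀ z, Tendsto (fun n : ℕ => ((m : ℝ) ^ n)⁻¹ * (F^[n] z) ⟨0, hd⟩)
      atTop (𝓝 (Φ z)))
    (γ : ℝ → EuclideanSpace ℝ (Fin d)) (γ' : ℝ → EuclideanSpace ℝ (Fin d))
    (hγderiv : ∀ t ∈ Set.Icc (0 : ℝ) 1, HasDerivAt γ (γ' t) t)
    (hγconic : ∀ t ∈ Set.Icc (0 : ℝ) 1,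
      γ' t ≠ 0 ∧ ‖projQ d 1 hd (γ' t)‖ ≤ α * |γ' t ⟨0, hd⟩|)
    (hne : γ 0 ≠ γ 1) :
    Φ (γ 0) ≠ Φ (γ 1) := by
  classical
  obtain ⟨C, hC⟩ := hGbdd
  have hC0 : 0 ≤ C := le_trans (norm_nonneg _) (hC 0)
  have hmR : (1 : ℝ) < |(m : ℝ)| := by
    rw [← Int.cast_abs]; exact_mod_cast hm
  have hmpos : (0 : ℝ) < |(m : ℝ)| := lt_trans one_pos hmR
  have hm0 : ((m : ℝ)) ≠ 0 := by
    intro h0; rw [h0] at hmR; simp at hmR; linarith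
  have hK0 : (0 : ℝ) < K := lt_trans one_pos hK
  -- coordinate bound
  have hcoordle : ∀ (x : EuclideanSpace ℝ (Fin d)) (i : Fin d), |x i| ≤ ‖x‖ := by
    intro x i
    rw [EuclideanSpace.norm_eq, ← Real.sqrt_sq_eq_abs]
    apply Real.sqrt_le_sqrt
    simpa [Real.norm_eq_abs, sq_abs] using
      Finset.single_le_sum (f := fun j => (x j) ^ 2) (fun j _ => sq_nonneg _)
        (Finset.mem_univ i)
  -- F is differentiable
  obtain ⟨Mc, hMc⟩ : ∃ L : EuclideanSpace ℝ (Fin d) →L[ℝ] EuclideanSpace ℝ (Fin d),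
      ∀ z, L z = toEuc d (M.mulVec z) :=
    ⟨(EuclideanSpace.equiv (Fin d) ℝ).symm.toContinuousLinearMap ∘L
      ((Matrix.mulVecLin M).toContinuousLinearMap ∘L
        (EuclideanSpace.equiv (Fin d) ℝ).toContinuousLinearMap), fun z => by ext i; simp [toEuc]; rfl⟩
  have hFdiff : Differentiable ℝ F := by
    have hFeq : F = fun z => Mc z + G z := funext fun z => by rw [hF z, hMc]
    rw [hFeq]
    exact Mc.differentiable.add (hGC1.differentiable one_ne_zero)
  -- first coordinate of F
  have hFcoord : ∀ w : EuclideanSpace ℝ (Fin d),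
      F w ⟨0, hd⟩ = (m : ℝ) * w ⟨0, hd⟩ + G w ⟨0, hd⟩ := by
    intro w
    rw [hF w]
    show toEuc d (M.mulVec w) ⟨0, hd⟩ + G w ⟨0, hd⟩ = _
    rw [hPM]
  -- vanishing criterion
  have hQzero : ∀ x : EuclideanSpace ℝ (Fin d),
      x ⟨0, hd⟩ = 0 → projQ d 1 hd x = 0 → x = 0 := by
    intro x h0 hq
    ext i
    show x i = 0
    rcases Nat.eq_zero_or_pos i.val with hi | hi
    · have hh : i = (⟨0, hd⟩ : Fin d) := Fin.ext hi
      rw [hh]; exact h0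
    · have hj : i.val - 1 < d - 1 := by have := i.isLt; omega
      have h2 : x ⟨1 + (i.val - 1), by omega⟩ = 0 := congrFun (congrArg WithLp.ofLp hq) ⟨i.val - 1, hj⟩
      have hh : (⟨1 + (i.val - 1), by omega⟩ : Fin d) = i :=
        Fin.ext (show 1 + (i.val - 1) = i.val by omega)
      rwa [hh] at h2
  -- first coordinate of tangent vector does not vanish
  have hPγ : ∀ t ∈ Set.Icc (0 : ℝ) 1, 0 < |γ' t ⟨0, hd⟩| := by
    intro t ht
    rcases hγconic t ht with ⟨hne0, hcc⟩
    rcases eq_or_ne (γ' t ⟨0, hd⟩) 0 with h0 | h0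
    · exfalso
      apply hne0
      apply hQzero _ h0
      rw [h0] at hcc
      simp only [abs_zero, mul_zero] at hcc
      exact norm_le_zero_iff.mp hcc
    · exact abs_pos.mpr h0
  -- main induction: derivative of the iterated curve, cone invariance, expansion
  have main : ∀ n : ℕ, ∀ t ∈ Set.Icc (0 : ℝ) 1,
      HasDerivAt (fun s => F^[n] (γ s)) (vseq d F γ γ' n t) t ∧
      ‖projQ d 1 hd (vseq d F γ γ' n t)‖ ≤ α * |vseq d F γ γ' n t ⟨0, hd⟩| ∧
      K ^ n * |γ' t ⟨0, hd⟩| ≤ |vseq d F γ γ' n t ⟨0, hd⟩| := by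
    intro n
    induction n with
    | zero =>
      intro t ht
      refine ⟨by exact hγderiv t ht, (hγconic t ht).2, by simp [vseq]⟩
    | succ n ih =>
      intro t ht
      obtain ⟨hder, hcone', hgrow⟩ := ih t ht
      have hit : HasDerivAt (fun s => F^[n + 1] (γ s))
          (fderiv ℝ F (F^[n] (γ t)) (vseq d F γ γ' n t)) t := by
        have := ((hFdiff (F^[n] (γ t))).hasFDerivAt).comp_hasDerivAt t hder
        rw [Function.iterate_succ']
        exact this
      obtain ⟨hc1, hc2⟩ := hcone (F^[n] (γ t)) _ hcone'
      refine ⟨hit, hc1, ?_⟩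
      calc K ^ (n + 1) * |γ' t ⟨0, hd⟩| = K * (K ^ n * |γ' t ⟨0, hd⟩|) := by ring
        _ ≤ K * |vseq d F γ γ' n t ⟨0, hd⟩| :=
            mul_le_mul_of_nonneg_left hgrow (le_of_lt hK0)
        _ ≤ |(fderiv ℝ F (F^[n] (γ t)) (vseq d F γ γ' n t)) ⟨0, hd⟩| := hc2
  -- derivative of the first coordinate
  obtain ⟨Pc, hPc⟩ : ∃ L : EuclideanSpace ℝ (Fin d) →L[ℝ] ℝ, ∀ z, L z = z ⟨0, hd⟩ :=
    ⟨LinearMap.toContinuousLinearMap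
      { toFun := fun z : EuclideanSpace ℝ (Fin d) => z ⟨0, hd⟩,
        map_add' := fun _ _ => rfl, map_smul' := fun _ _ => rfl }, fun z => rfl⟩
  have hwderiv : ∀ n : ℕ, ∀ t ∈ Set.Icc (0 : ℝ) 1,
      HasDerivAt (fun s => (F^[n] (γ s)) ⟨0, hd⟩) (vseq d F γ γ' n t ⟨0, hd⟩) t := by
    intro n t ht
    have := (Pc.hasFDerivAt).comp_hasDerivAt t (main n t ht).1
    simpa [hPc, Function.comp_def] using this
  have hwne : ∀ n : ℕ, ∀ t ∈ Set.Icc (0 : ℝ) 1, vseq d F γ γ' n t ⟨0, hd⟩ ≠ 0 := by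
    intro n t ht
    have h1 := (main n t ht).2.2
    have h2 : 0 < K ^ n * |γ' t ⟨0, hd⟩| := mul_pos (pow_pos hK0 n) (hPγ t ht)
    intro h0
    rw [h0] at h1
    simp at h1
    linarith
  have hcont : ∀ n : ℕ, ContinuousOn (fun t => (F^[n] (γ t)) ⟨0, hd⟩)
      (Set.Icc (0 : ℝ) 1) :=
    fun n t ht => ((hwderiv n t ht).continuousAt).continuousWithinAt
  -- constant sign of the derivative of the first coordinate
  have hsigns : ∀ n : ℕ, ∃ σ : ℝ, |σ| = 1 ∧ ∀ t ∈ Set.Icc (0 : ℝ) 1,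
      |vseq d F γ γ' n t ⟨0, hd⟩| = σ * vseq d F γ γ' n t ⟨0, hd⟩ := by
    intro n
    rcases hasDerivWithinAt_forall_lt_or_forall_gt_of_forall_ne (convex_Icc (0 : ℝ) 1)
      (fun t ht => (hwderiv n t ht).hasDerivWithinAt) (hwne n) with hneg | hpos
    · exact ⟨-1, by norm_num, fun t ht => by rw [abs_of_neg (hneg t ht)]; ring⟩
    · exact ⟨1, by norm_num, fun t ht => by rw [abs_of_pos (hpos t ht)]; ring⟩
  -- the signed increment equals the absolute increment
  have hsigma_delta : ∀ n : ℕ, ∀ σ : ℝ, |σ| = 1 →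
      (∀ t ∈ Set.Icc (0 : ℝ) 1,
        |vseq d F γ γ' n t ⟨0, hd⟩| = σ * vseq d F γ γ' n t ⟨0, hd⟩) →
      |(F^[n] (γ 1)) ⟨0, hd⟩ - (F^[n] (γ 0)) ⟨0, hd⟩| =
        σ * ((F^[n] (γ 1)) ⟨0, hd⟩ - (F^[n] (γ 0)) ⟨0, hd⟩) := by
    intro n σ hσ1 habs
    obtain ⟨c, hc, hslope⟩ := exists_hasDerivAt_eq_slope
      (fun t => σ * (F^[n] (γ t)) ⟨0, hd⟩)
      (fun t => σ * vseq d F γ γ' n t ⟨0, hd⟩) one_pos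
      (continuousOn_const.mul (hcont n))
      (fun x hx => (hwderiv n x (Set.Ioo_subset_Icc_self hx)).const_mul σ)
    have hcIcc := Set.Ioo_subset_Icc_self hc
    have hge : 0 ≤ σ * ((F^[n] (γ 1)) ⟨0, hd⟩ - (F^[n] (γ 0)) ⟨0, hd⟩) := by
      have h1 : σ * vseq d F γ γ' n c ⟨0, hd⟩ =
          σ * ((F^[n] (γ 1)) ⟨0, hd⟩ - (F^[n] (γ 0)) ⟨0, hd⟩) := by
        rw [hslope]; ring
      rw [← h1, ← habs c hcIcc]
      exact abs_nonneg _
    calc |(F^[n] (γ 1)) ⟨0, hd⟩ - (F^[n] (γ 0)) ⟨0, hd⟩|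
        = |σ * ((F^[n] (γ 1)) ⟨0, hd⟩ - (F^[n] (γ 0)) ⟨0, hd⟩)| := by
          rw [abs_mul, hσ1, one_mul]
      _ = σ * ((F^[n] (γ 1)) ⟨0, hd⟩ - (F^[n] (γ 0)) ⟨0, hd⟩) := abs_of_nonneg hge
  -- base increment is nonzero
  have hΔ0 : (F^[0] (γ 1)) ⟨0, hd⟩ - (F^[0] (γ 0)) ⟨0, hd⟩ ≠ 0 := by
    intro h0
    obtain ⟨c, hc, hs⟩ := exists_hasDerivAt_eq_slope
      (fun t => (F^[0] (γ t)) ⟨0, hd⟩) (fun t => vseq d F γ γ' 0 t ⟨0, hd⟩) one_pos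
      (hcont 0) (fun x hx => hwderiv 0 x (Set.Ioo_subset_Icc_self hx))
    apply hwne 0 c (Set.Ioo_subset_Icc_self hc)
    rw [hs, h0]
    simp
  -- one-step expansion of the increment
  have hstep : ∀ n : ℕ,
      K * |(F^[n] (γ 1)) ⟨0, hd⟩ - (F^[n] (γ 0)) ⟨0, hd⟩| ≤
        |(F^[n + 1] (γ 1)) ⟨0, hd⟩ - (F^[n + 1] (γ 0)) ⟨0, hd⟩| := by
    intro n
    obtain ⟨σ, hσ1, hσ⟩ := hsigns n
    obtain ⟨τ, hτ1, hτ⟩ := hsigns (n + 1)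
    obtain ⟨c, hc, hs⟩ := exists_hasDerivAt_eq_slope
      (fun t => τ * (F^[n + 1] (γ t)) ⟨0, hd⟩ - (K * σ) * (F^[n] (γ t)) ⟨0, hd⟩)
      (fun t => τ * vseq d F γ γ' (n + 1) t ⟨0, hd⟩ -
        (K * σ) * vseq d F γ γ' n t ⟨0, hd⟩) one_pos
      ((continuousOn_const.mul (hcont (n + 1))).sub (continuousOn_const.mul (hcont n)))
      (fun x hx => ((hwderiv (n + 1) x (Set.Ioo_subset_Icc_self hx)).const_mul τ).sub
        ((hwderiv n x (Set.Ioo_subset_Icc_self hx)).const_mul (K * σ)))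
    have hcIcc := Set.Ioo_subset_Icc_self hc
    have hexp : K * |vseq d F γ γ' n c ⟨0, hd⟩| ≤
        |vseq d F γ γ' (n + 1) c ⟨0, hd⟩| :=
      (hcone (F^[n] (γ c)) _ ((main n c hcIcc).2.1)).2
    have hnn : 0 ≤ τ * vseq d F γ γ' (n + 1) c ⟨0, hd⟩ -
        (K * σ) * vseq d F γ γ' n c ⟨0, hd⟩ := by
      have e1 := hτ c hcIcc
      have e2 := hσ c hcIcc
      nlinarith [hexp]
    have hineq : (K * σ) * ((F^[n] (γ 1)) ⟨0, hd⟩ - (F^[n] (γ 0)) ⟨0, hd⟩) ≤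
        τ * ((F^[n + 1] (γ 1)) ⟨0, hd⟩ - (F^[n + 1] (γ 0)) ⟨0, hd⟩) := by
      have h1 : τ * vseq d F γ γ' (n + 1) c ⟨0, hd⟩ -
          (K * σ) * vseq d F γ γ' n c ⟨0, hd⟩ =
          (τ * (F^[n + 1] (γ 1)) ⟨0, hd⟩ - (K * σ) * (F^[n] (γ 1)) ⟨0, hd⟩) -
          (τ * (F^[n + 1] (γ 0)) ⟨0, hd⟩ - (K * σ) * (F^[n] (γ 0)) ⟨0, hd⟩) := by
        rw [hs]; ring
      rw [h1] at hnn
      linarith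
    rw [hsigma_delta n σ hσ1 hσ, hsigma_delta (n + 1) τ hτ1 hτ]
    calc K * (σ * ((F^[n] (γ 1)) ⟨0, hd⟩ - (F^[n] (γ 0)) ⟨0, hd⟩))
        = (K * σ) * ((F^[n] (γ 1)) ⟨0, hd⟩ - (F^[n] (γ 0)) ⟨0, hd⟩) := by ring
      _ ≤ τ * ((F^[n + 1] (γ 1)) ⟨0, hd⟩ - (F^[n + 1] (γ 0)) ⟨0, hd⟩) := hineq
  -- geometric growth of the increments
  have hgeom : ∀ n : ℕ,
      K ^ n * |(F^[0] (γ 1)) ⟨0, hd⟩ - (F^[0] (γ 0)) ⟨0, hd⟩| ≤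
        |(F^[n] (γ 1)) ⟨0, hd⟩ - (F^[n] (γ 0)) ⟨0, hd⟩| := by
    intro n
    induction n with
    | zero => simp
    | succ n ih =>
      calc K ^ (n + 1) * |(F^[0] (γ 1)) ⟨0, hd⟩ - (F^[0] (γ 0)) ⟨0, hd⟩|
          = K * (K ^ n * |(F^[0] (γ 1)) ⟨0, hd⟩ - (F^[0] (γ 0)) ⟨0, hd⟩|) := by ring
        _ ≤ K * |(F^[n] (γ 1)) ⟨0, hd⟩ - (F^[n] (γ 0)) ⟨0, hd⟩| :=
            mul_le_mul_of_nonneg_left ih (le_of_lt hK0)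
        _ ≤ |(F^[n + 1] (γ 1)) ⟨0, hd⟩ - (F^[n + 1] (γ 0)) ⟨0, hd⟩| := hstep n
  -- uniform bound: |P(Fⁿ z) − mⁿ Φ(z)| ≤ C / (|m| − 1)
  have hbound : ∀ z : EuclideanSpace ℝ (Fin d), ∀ n : ℕ,
      |(F^[n] z) ⟨0, hd⟩ - (m : ℝ) ^ n * Φ z| ≤ C / (|(m : ℝ)| - 1) := by
    intro z n
    set r : ℝ := |(m : ℝ)|⁻¹ with hrdef
    have hr1 : r < 1 := by
      rw [hrdef]
      exact inv_lt_one_of_one_lt₀ hmR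
    have hr0 : 0 < r := by rw [hrdef]; positivity
    have hu : ∀ k : ℕ, dist (((m : ℝ) ^ k)⁻¹ * (F^[k] z) ⟨0, hd⟩)
        (((m : ℝ) ^ (k + 1))⁻¹ * (F^[k + 1] z) ⟨0, hd⟩) ≤ (C * r) * r ^ k := by
      intro k
      have hit : (F^[k + 1] z) ⟨0, hd⟩ =
          (m : ℝ) * (F^[k] z) ⟨0, hd⟩ + G (F^[k] z) ⟨0, hd⟩ := by
        rw [Function.iterate_succ_apply']; exact hFcoord _
      have key : ((m : ℝ) ^ k)⁻¹ * (F^[k] z) ⟨0, hd⟩ -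
          ((m : ℝ) ^ (k + 1))⁻¹ * (F^[k + 1] z) ⟨0, hd⟩ =
          -(((m : ℝ) ^ (k + 1))⁻¹ * G (F^[k] z) ⟨0, hd⟩) := by
        rw [hit]
        field_simp
        ring
      rw [Real.dist_eq, key, abs_neg, abs_mul, abs_inv, abs_pow]
      have hG : |G (F^[k] z) ⟨0, hd⟩| ≤ C := le_trans (hcoordle _ _) (hC _)
      calc (|(m : ℝ)| ^ (k + 1))⁻¹ * |G (F^[k] z) ⟨0, hd⟩|
          ≤ (|(m : ℝ)| ^ (k + 1))⁻¹ * C := by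
            apply mul_le_mul_of_nonneg_left hG
            positivity
        _ = (C * r) * r ^ k := by
            rw [hrdef, ← inv_pow, pow_succ]
            ring
    have hdist := dist_le_of_le_geometric_of_tendsto r (C * r) hr1 hu (hΦ z) n
    have heqq : (F^[n] z) ⟨0, hd⟩ - (m : ℝ) ^ n * Φ z =
        (m : ℝ) ^ n * ((((m : ℝ) ^ n)⁻¹ * (F^[n] z) ⟨0, hd⟩) - Φ z) := by
      field_simp
    rw [heqq, abs_mul, abs_pow]
    rw [Real.dist_eq] at hdist
    calc |(m : ℝ)| ^ n * |((m : ℝ) ^ n)⁻¹ * (F^[n] z) ⟨0, hd⟩ - Φ z|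
        ≤ |(m : ℝ)| ^ n * ((C * r) * r ^ n / (1 - r)) := by
          apply mul_le_mul_of_nonneg_left hdist
          positivity
      _ = (C * r / (1 - r)) * (|(m : ℝ)| ^ n * r ^ n) := by ring
      _ = (C * r / (1 - r)) * ((|(m : ℝ)| * r) ^ n) := by rw [mul_pow]
      _ = C * r / (1 - r) := by
          rw [hrdef, mul_inv_cancel₀ (ne_of_gt hmpos)]
          simp
      _ = C / (|(m : ℝ)| - 1) := by
          have hbne : (1 : ℝ) - r ≠ 0 := ne_of_gt (by linarith)
          have hane : |(m : ℝ)| - 1 ≠ 0 := ne_of_gt (by linarith)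
          rw [div_eq_div_iff hbne hane, hrdef]
          field_simp
  -- conclusion
  intro heq
  have h2B : ∀ n : ℕ,
      |(F^[n] (γ 1)) ⟨0, hd⟩ - (F^[n] (γ 0)) ⟨0, hd⟩| ≤ 2 * (C / (|(m : ℝ)| - 1)) := by
    intro n
    have h1 := hbound (γ 1) n
    have h0 := hbound (γ 0) n
    have hsplit : (F^[n] (γ 1)) ⟨0, hd⟩ - (F^[n] (γ 0)) ⟨0, hd⟩ =
        ((F^[n] (γ 1)) ⟨0, hd⟩ - (m : ℝ) ^ n * Φ (γ 1)) -
        ((F^[n] (γ 0)) ⟨0, hd⟩ - (m : ℝ) ^ n * Φ (γ 0)) := by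
      rw [heq]; ring
    rw [hsplit]
    calc |((F^[n] (γ 1)) ⟨0, hd⟩ - (m : ℝ) ^ n * Φ (γ 1)) -
        ((F^[n] (γ 0)) ⟨0, hd⟩ - (m : ℝ) ^ n * Φ (γ 0))|
        ≤ |(F^[n] (γ 1)) ⟨0, hd⟩ - (m : ℝ) ^ n * Φ (γ 1)| +
          |(F^[n] (γ 0)) ⟨0, hd⟩ - (m : ℝ) ^ n * Φ (γ 0)| := abs_sub _ _
      _ ≤ 2 * (C / (|(m : ℝ)| - 1)) := by linarith
  have hΔ0pos : 0 < |(F^[0] (γ 1)) ⟨0, hd⟩ - (F^[0] (γ 0)) ⟨0, hd⟩| := abs_pos.mpr hΔ0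
  obtain ⟨n, hn⟩ := pow_unbounded_of_one_lt
    ((2 * (C / (|(m : ℝ)| - 1))) / |(F^[0] (γ 1)) ⟨0, hd⟩ - (F^[0] (γ 0)) ⟨0, hd⟩|) hK
  have hlt : 2 * (C / (|(m : ℝ)| - 1)) <
      K ^ n * |(F^[0] (γ 1)) ⟨0, hd⟩ - (F^[0] (γ 0)) ⟨0, hd⟩| :=
    (div_lt_iff₀ hΔ0pos).mp hn
  linarith [hgeom n, h2B n]
end
end

section
/- Let M be a d×d integer matrix of block-diagonal form M(z) = (m·z₁, C(Qz)), where m is an integer with |m| > 1 and C is a (d−1)×(d−1) integer matrix with operator norm ‖C‖ < |m|. Then there exists δ = δ(M) > 0 such that for every C¹, ℤ^d-periodic map G: ℝ^d → ℝ^d with sup_{z}(‖G(z)‖ + ‖DG(z)‖) < δ, the lift F̂(z) = Mz + G(z) satisfies: the limit Φ̂(z) = lim_{n→∞} m^{−n} (F̂^n(z))₁ exists for all z, the map Ĥ(z) = (Φ̂(z), Qz) is a homeomorphism of ℝ^d with Ĥ(z + p) = Ĥ(z) + (p₁, Qp) for all p ∈ ℤ^d, and Ĥ∘F̂∘Ĥ^{−1}(x,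 y) = (m·x, g(x,y)) for some continuous g. Hence the torus map induced by F̂ is topologically conjugate to a skew product over the expanding circle map x ↦ mx mod 1, for every sufficiently small C¹ periodic perturbation G. -/
open Filter Topology

noncomputable section

section AUX

lemma aux_coord_le {n : ℕ} (v : EuclideanSpace ℝ (Fin n)) (i : Fin n) : |v i| ≤ ‖v‖ := by
  rw [EuclideanSpace.norm_eq]
  rw [show |v i| = Real.sqrt (‖v i‖^2) by rw [Real.sqrt_sq (norm_nonneg _)]; exact (Real.norm_eq_abs _).symm]
  apply Real.sqrt_le_sqrt
  exact Finset.single_le_sum (f := fun j => ‖v j‖^2) (fun j _ => by positivity) (Finset.mem_univ i)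

lemma aux_projQ_apply {d : ℕ} (hd : 0 < d) (v : EuclideanSpace ℝ (Fin d)) (j : Fin (d-1)) :
    projQ d 1 hd v j = v ⟨1 + j.val, by omega⟩ := rfl

lemma aux_projQ_norm_le {d : ℕ} (hd : 0 < d) (v : EuclideanSpace ℝ (Fin d)) :
    ‖projQ d 1 hd v‖ ≤ ‖v‖ := by
  rw [EuclideanSpace.norm_eq, EuclideanSpace.norm_eq]
  apply Real.sqrt_le_sqrt
  have : ∑ j : Fin (d-1), ‖projQ d 1 hd v j‖^2
      = ∑ i ∈ Finset.image (fun j : Fin (d-1) => (⟨1 + j.val, by omega⟩ : Fin d)) Finset.univ, ‖v i‖^2 := by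
    rw [Finset.sum_image]
    · rfl
    · intro x _ y _ h
      have := congrArg Fin.val h
      simp at this
      exact Fin.ext this
  rw [this]
  apply Finset.sum_le_sum_of_subset_of_nonneg (Finset.subset_univ _)
  intro i _ _; positivity

lemma aux_norm_le {d : ℕ} (hd : 0 < d) (v : EuclideanSpace ℝ (Fin d)) :
    ‖v‖ ≤ Real.sqrt d * (|v ⟨0, hd⟩| + ‖projQ d 1 hd v‖) := by
  set s := |v ⟨0, hd⟩| + ‖projQ d 1 hd v‖ with hs
  have hs0 : 0 ≤ s := by positivity
  rw [EuclideanSpace.norm_eq]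
  have h1 : ∑ i : Fin d, ‖v i‖^2 ≤ (d : ℝ) * s^2 := by
    calc ∑ i : Fin d, ‖v i‖^2 ≤ ∑ _i : Fin d, s^2 := by
          apply Finset.sum_le_sum
          intro i _
          have hvi : |v i| ≤ s := by
            by_cases h0 : i.val = 0
            · have : i = ⟨0, hd⟩ := Fin.ext h0
              rw [this]
              exact le_add_of_nonneg_right (norm_nonneg _)
            · have hj : i.val - 1 < d - 1 := by omega
              have : v i = projQ d 1 hd v ⟨i.val - 1, hj⟩ := by
                rw [aux_projQ_apply]
                refine congrArg v.ofLp ?_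
                refine Fin.ext ?_; simp; omega
              rw [this]
              calc |projQ d 1 hd v ⟨i.val - 1, hj⟩| ≤ ‖projQ d 1 hd v‖ := aux_coord_le _ _
                _ ≤ s := le_add_of_nonneg_left (abs_nonneg _)
          calc ‖v i‖^2 = |v i|^2 := by rw [Real.norm_eq_abs]
            _ ≤ s^2 := by apply pow_le_pow_left₀ (abs_nonneg _) hvi _
      _ = (d : ℝ) * s^2 := by simp [Finset.sum_const, mul_comm]
  calc Real.sqrt (∑ i : Fin d, ‖v i‖^2) ≤ Real.sqrt ((d:ℝ) * s^2) := Real.sqrt_le_sqrt h1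
    _ = Real.sqrt d * s := by
        rw [Real.sqrt_mul (by positivity), Real.sqrt_sq hs0]

lemma aux_projQ_add {d : ℕ} (hd : 0 < d) (v w : EuclideanSpace ℝ (Fin d)) :
    projQ d 1 hd (v + w) = projQ d 1 hd v + projQ d 1 hd w := by
  ext j; exact PiLp.add_apply _ _ _ _

lemma aux_projQ_sub {d : ℕ} (hd : 0 < d) (v w : EuclideanSpace ℝ (Fin d)) :
    projQ d 1 hd (v - w) = projQ d 1 hd v - projQ d 1 hd w := by
  ext j; exact PiLp.sub_apply _ _ _ _

lemma aux_coe_eq_coe (x y : ℝ) : (x : AddCircle (1:ℝ)) = y ↔ ∃ k : ℤ, y = x + k := by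
  rw [QuotientAddGroup.eq]
  constructor
  · rintro h
    rw [AddSubgroup.mem_zmultiples_iff] at h
    obtain ⟨k, hk⟩ := h
    have hk' : (k : ℝ) = -x + y := by rw [← hk]; simp [zsmul_eq_mul]
    exact ⟨k, by linarith⟩
  · rintro ⟨k, rfl⟩
    rw [AddSubgroup.mem_zmultiples_iff]
    exact ⟨k, by push_cast [zsmul_eq_mul]; ring⟩

lemma aux_torusProj_surj (n : ℕ) : Function.Surjective (torusProj n) := by
  intro θ
  have h : ∀ i, ∃ x : ℝ, (x : AddCircle (1:ℝ)) = θ i := fun i => Quotient.exists_rep (θ i)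
  refine ⟨toEuc n (fun i => (h i).choose), funext fun i => (h i).choose_spec⟩

lemma aux_quotientMap_torusProj (n : ℕ) : IsQuotientMap (torusProj n) := by
  have : IsOpenQuotientMap (Pi.map (fun (_ : Fin n) (x : ℝ) => ((x : AddCircle (1:ℝ))))) :=
    IsOpenQuotientMap.piMap (fun i => QuotientAddGroup.isOpenQuotientMap_mk)
  exact this.isQuotientMap.comp (PiLp.homeomorph 2 (fun _ : Fin n => ℝ)).isQuotientMap

end AUX

set_option maxHeartbeats 1600000

/--
Let `M` be a `d×d` integer matrix of block-diagonal form
`M(z) = (m·z₁, C(Qz))`, where `m` is an integer with `|m| > 1` and `C` is a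
`(d−1)×(d−1)` integer matrix with operator norm `‖C‖ < |m|`. Then there exists
`δ = δ(M) > 0` such that for every C¹, `ℤ^d`-periodic map `G : ℝ^d → ℝ^d` with
`sup_z (‖G(z)‖ + ‖DG(z)‖) < δ`, the lift `F̂(z) = Mz + G(z)` satisfies: the limit
`Φ̂(z) = lim_{n→∞} m^{−n} (F̂ⁿ(z))₁` exists for all `z`, the map `Ĥ(z) = (Φ̂(z), Qz)` is
a homeomorphism of `ℝ^d` with `Ĥ(z + p) = Ĥ(z) + (p₁, Qp)` for all `p ∈ ℤ^d`, and
`Ĥ∘F̂∘Ĥ⁻¹(x, y) = (m·x, g(x,y))` for some continuous `g`. Hence the torus map induced by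
`F̂` is topologically conjugate to a skew product over the expanding circle map
`x ↦ mx mod 1`, for every sufficiently small C¹ periodic perturbation `G`.
-/
theorem stmt19 (d : ℕ) (hd : 0 < d)
    (M : Matrix (Fin d) (Fin d) ℝ) (hMint : ∀ i j, ∃ n : ℤ, M i j = (n : ℝ))
    (m : ℤ) (hm : 1 < |m|)
    (C : EuclideanSpace ℝ (Fin (d - 1)) →L[ℝ] EuclideanSpace ℝ (Fin (d - 1)))
    (hCint : ∀ i j, ∃ n : ℤ, C (EuclideanSpace.single j (1 : ℝ)) i = (n : ℝ))
    (hCnorm : ‖C‖ < |(m : ℝ)|)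
    (hblock : ∀ z : EuclideanSpace ℝ (Fin d),
      toEuc d (M.mulVec z) ⟨0, hd⟩ = (m : ℝ) * z ⟨0, hd⟩ ∧
      projQ d 1 hd (toEuc d (M.mulVec z)) = C (projQ d 1 hd z)) :
    ∃ δ > (0 : ℝ),
      ∀ G : EuclideanSpace ℝ (Fin d) → EuclideanSpace ℝ (Fin d),
        ContDiff ℝ 1 G →
        (∀ (z : EuclideanSpace ℝ (Fin d)) (p : Fin d → ℤ),
          G (z + toEuc d fun i => (p i : ℝ)) = G z) →
        (∀ z, ‖G z‖ + ‖fderiv ℝ G z‖ < δ) →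
        ∀ F : EuclideanSpace ℝ (Fin d) → EuclideanSpace ℝ (Fin d),
          (∀ z, F z = toEuc d (M.mulVec z) + G z) →
          ∃ Φ : EuclideanSpace ℝ (Fin d) → ℝ,
            (∀ z, Tendsto (fun n : ℕ => ((m : ℝ) ^ n)⁻¹ * (F^[n] z) ⟨0, hd⟩)
              atTop (𝓝 (Φ z))) ∧
            ∃ H : EuclideanSpace ℝ (Fin d) ≃ₜ (ℝ × EuclideanSpace ℝ (Fin (d - 1))),
              (∀ z, H z = (Φ z, projQ d 1 hd z)) ∧
              (∀ (z : EuclideanSpace ℝ (Fin d)) (p : Fin d → ℤ),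
                H (z + toEuc d fun i => (p i : ℝ))
                  = H z + ((p ⟨0, hd⟩ : ℝ), projQ d 1 hd (toEuc d fun i => (p i : ℝ)))) ∧
              (∃ g : ℝ × EuclideanSpace ℝ (Fin (d - 1)) → EuclideanSpace ℝ (Fin (d - 1)),
                Continuous g ∧
                ∀ w : ℝ × EuclideanSpace ℝ (Fin (d - 1)),
                  H (F (H.symm w)) = ((m : ℝ) * w.1, g w)) ∧
              -- hence the induced torus map is topologically conjugate to a skew product
              -- over the expanding circle map `x ↦ mx mod 1`:
              ∃ (Fbar : (Fin d → AddCircle (1 : ℝ)) → (Fin d → AddCircle (1 : ℝ)))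
                (Hbar : (Fin d → AddCircle (1 : ℝ)) ≃ₜ
                  (AddCircle (1 : ℝ) × (Fin (d - 1) → AddCircle (1 : ℝ))))
                (gbar : AddCircle (1 : ℝ) × (Fin (d - 1) → AddCircle (1 : ℝ)) →
                  (Fin (d - 1) → AddCircle (1 : ℝ))),
                (∀ z, Fbar (torusProj d z) = torusProj d (F z)) ∧
                (∀ z, Hbar (torusProj d z) = (((Φ z : ℝ) : AddCircle (1 : ℝ)),
                  torusProj (d - 1) (projQ d 1 hd z))) ∧
                (∀ θ, Hbar (Fbar (Hbar.symm θ)) = (m • θ.1, gbar θ)) := by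
  classical
  set e0 : Fin d := ⟨0, hd⟩ with he0
  set a : ℝ := |(m : ℝ)| with ha
  have ha2 : (2 : ℝ) ≤ a := by
    have : (2 : ℤ) ≤ |m| := hm
    rw [ha, ← Int.cast_abs]
    exact_mod_cast this
  have ha1 : (1 : ℝ) < a := by linarith
  have hC0 : (0 : ℝ) ≤ ‖C‖ := norm_nonneg _
  set sd : ℝ := Real.sqrt d with hsd
  have hsd1 : (1 : ℝ) ≤ sd := by
    rw [hsd]
    rw [show (1:ℝ) = Real.sqrt 1 by simp]
    apply Real.sqrt_le_sqrt
    exact_mod_cast hd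
  set δ : ℝ := min (a - ‖C‖) (a - 1) / (4 * sd) with hδ
  have hδpos : 0 < δ := by
    apply div_pos
    · apply lt_min <;> linarith
    · linarith
  have hδ4 : 4 * sd * δ ≤ min (a - ‖C‖) (a - 1) := by
    rw [hδ]
    rw [mul_div_assoc']
    rw [mul_comm (4 * sd)]
    rw [mul_div_assoc]
    nlinarith [min_le_left (a - ‖C‖) (a - 1), min_le_right (a - ‖C‖) (a - 1),
      div_self (show (4:ℝ) * sd ≠ 0 by positivity)]
  have hcone : ‖C‖ + 2 * sd * δ ≤ a - 2 * sd * δ := by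
    have := min_le_left (a - ‖C‖) (a - 1)
    nlinarith
  have hgrow : (a + 1) / 2 ≤ a - 2 * sd * δ := by
    have := min_le_right (a - ‖C‖) (a - 1)
    nlinarith
  have hlam1 : (1 : ℝ) < (a + 1) / 2 := by linarith
  refine ⟨δ, hδpos, ?_⟩
  intro G hG hGper hGδ F hF
  -- basic bounds on G
  have hGnorm : ∀ z, ‖G z‖ ≤ δ := by
    intro z
    have := hGδ z
    have h2 := norm_nonneg (fderiv ℝ G z)
    linarith
  have hGdiff : Differentiable ℝ G := hG.differentiable one_ne_zero
  have hGlip : ∀ x y, ‖G x - G y‖ ≤ δ * ‖x - y‖ := by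
    intro x y
    exact Convex.norm_image_sub_le_of_norm_fderiv_le (f := G) (C := δ) (s := Set.univ)
      (fun z _ => hGdiff z)
      (fun z _ => by have h1 := hGδ z; have h2 := norm_nonneg (G z); linarith)
      convex_univ (Set.mem_univ y) (Set.mem_univ x)
  have hm0 : (m : ℝ) ≠ 0 := by
    intro h; rw [ha, h] at ha1; simp at ha1; linarith
  have ha0 : (0 : ℝ) < a := by linarith
  -- coordinate dynamics
  have hFe0 : ∀ w, (F w) e0 = (m : ℝ) * w e0 + (G w) e0 := by
    intro w
    rw [hF w]
    rw [PiLp.add_apply]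
    rw [(hblock w).1]
  have hFQ : ∀ w, projQ d 1 hd (F w) = C (projQ d 1 hd w) + projQ d 1 hd (G w) := by
    intro w
    rw [hF w, aux_projQ_add, (hblock w).2]
  have hFcont : Continuous F := by
    have : F = fun z : EuclideanSpace ℝ (Fin d) => toEuc d (M.mulVec z) + G z := funext hF
    rw [this]
    apply Continuous.add ?_ hG.continuous
    refine (PiLp.continuous_toLp 2 (fun _ : Fin d => ℝ)).comp
      (f := fun z : EuclideanSpace ℝ (Fin d) => M.mulVec z) ?_
    apply continuous_pi
    intro i
    unfold Matrix.mulVec dotProduct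
    exact continuous_finset_sum _ (fun j _ => (continuous_const.mul (PiLp.continuous_apply 2 _ j)))
  set Bc : ℝ := δ * (a - 1)⁻¹ with hBc
  have hBcpos : 0 < Bc := by
    apply mul_pos hδpos
    rw [inv_pos]; linarith
  have hMZ : ∀ p : Fin d → ℤ, ∃ q : Fin d → ℤ,
      toEuc d (M.mulVec (toEuc d fun i => (p i : ℝ))) = toEuc d (fun i => (q i : ℝ)) := by
    intro p
    refine ⟨fun i => ∑ j, (hMint i j).choose * p j, PiLp.ext fun i => ?_⟩
    show ∑ j, M i j * (p j : ℝ) = _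
    push_cast
    refine Finset.sum_congr rfl fun j _ => ?_
    exact mul_eq_mul_right_iff.mpr (Or.inl (hMint i j).choose_spec)
  have hFper : ∀ (z : EuclideanSpace ℝ (Fin d)) (p : Fin d → ℤ), ∃ q : Fin d → ℤ,
      F (z + toEuc d (fun i => (p i : ℝ))) = F z + toEuc d (fun i => (q i : ℝ)) ∧
      ((q e0 : ℝ)) = (m : ℝ) * (p e0 : ℝ) := by
    intro z p
    obtain ⟨q, hq⟩ := hMZ p
    refine ⟨q, ?_, ?_⟩
    · rw [hF, hF, hGper]
      rw [show toEuc d (M.mulVec ((z + toEuc d fun i => (p i : ℝ)) : EuclideanSpace ℝ (Fin d)))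
            = toEuc d (M.mulVec z) + toEuc d (M.mulVec (toEuc d fun i => (p i : ℝ))) from
          by unfold toEuc; rw [WithLp.ofLp_add, M.mulVec_add, WithLp.toLp_add], hq]
      abel
    · have h1 := (hblock (toEuc d fun i => (p i : ℝ))).1
      rw [hq] at h1
      exact h1
  have hFnper : ∀ (n : ℕ) (z : EuclideanSpace ℝ (Fin d)) (p : Fin d → ℤ), ∃ q : Fin d → ℤ,
      F^[n] (z + toEuc d (fun i => (p i : ℝ))) = F^[n] z + toEuc d (fun i => (q i : ℝ)) ∧
      ((q e0 : ℝ)) = (m : ℝ) ^ n * (p e0 : ℝ) := by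
    intro n
    induction n with
    | zero => intro z p; exact ⟨p, by simp, by simp⟩
    | succ k ih =>
      intro z p
      obtain ⟨q, hq1, hq2⟩ := ih z p
      obtain ⟨r, hr1, hr2⟩ := hFper (F^[k] z) q
      refine ⟨r, ?_, ?_⟩
      · rw [Function.iterate_succ_apply', hq1, hr1, Function.iterate_succ_apply']
      · rw [hr2, hq2]; ring
  have hainv : a⁻¹ < 1 := by
    rw [inv_lt_one_iff₀]; right; exact ha1
  have hainv0 : 0 < a⁻¹ := by rw [inv_pos]; linarith
  -- existence of Φ and its properties
  obtain ⟨Φ, hΦlim, hΦcont, hΦbd, hΦF, hΦper⟩ :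
      ∃ Φ : EuclideanSpace ℝ (Fin d) → ℝ,
        (∀ z, Tendsto (fun n : ℕ => ((m : ℝ) ^ n)⁻¹ * (F^[n] z) e0) atTop (𝓝 (Φ z))) ∧
        Continuous Φ ∧
        (∀ z, |Φ z - z e0| ≤ Bc) ∧
        (∀ z, Φ (F z) = (m : ℝ) * Φ z) ∧
        (∀ (z : EuclideanSpace ℝ (Fin d)) (p : Fin d → ℤ),
          Φ (z + toEuc d fun i => (p i : ℝ)) = Φ z + p e0) := by
    have hFk : ∀ k : ℕ, Continuous (F^[k]) := fun k => hFcont.iterate k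
    set ψ : ℕ → EuclideanSpace ℝ (Fin d) → ℝ :=
      fun k z => ((m : ℝ) ^ (k + 1))⁻¹ * (G (F^[k] z)) e0 with hψ
    have hψbound : ∀ (k : ℕ) z, ‖ψ k z‖ ≤ δ * a⁻¹ * (a⁻¹) ^ k := by
      intro k z
      have h1 : ‖ψ k z‖ = (a ^ (k + 1))⁻¹ * |(G (F^[k] z)) e0| := by
        rw [hψ, Real.norm_eq_abs, abs_mul, abs_inv, abs_pow, ← ha]
      rw [h1]
      have h2 : |(G (F^[k] z)) e0| ≤ δ := le_trans (aux_coord_le _ _) (hGnorm _)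
      have h3 : (a ^ (k + 1))⁻¹ = a⁻¹ * (a⁻¹) ^ k := by
        rw [pow_succ, mul_inv, inv_pow]; ring
      rw [h3]
      calc a⁻¹ * (a⁻¹) ^ k * |(G (F^[k] z)) e0| ≤ a⁻¹ * (a⁻¹) ^ k * δ := by
            apply mul_le_mul_of_nonneg_left h2 (by positivity)
        _ = δ * a⁻¹ * (a⁻¹) ^ k := by ring
    have hu : Summable (fun k : ℕ => δ * a⁻¹ * (a⁻¹) ^ k) :=
      (summable_geometric_of_lt_one hainv0.le hainv).mul_left _
    have hsummψ : ∀ z, Summable (fun k => ψ k z) :=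
      fun z => Summable.of_norm_bounded hu (fun k => hψbound k z)
    have hsummn : ∀ z, Summable (fun k => ‖ψ k z‖) := fun z =>
      Summable.of_nonneg_of_le (fun k => norm_nonneg _) (fun k => hψbound k z) hu
    have hpow0 : ∀ n : ℕ, ((m : ℝ) ^ n) ≠ 0 := fun n => pow_ne_zero n hm0
    have key : ∀ (n : ℕ) z, ((m : ℝ) ^ n)⁻¹ * (F^[n] z) e0
        = z e0 + ∑ k ∈ Finset.range n, ψ k z := by
      intro n
      induction n with
      | zero => intro z; simp
      | succ nn ih =>
        intro z
        rw [Function.iterate_succ_apply', hFe0, Finset.sum_range_succ, ← add_assoc, ← ih z]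
        have h6 : ψ nn z = ((m : ℝ) ^ (nn + 1))⁻¹ * (G (F^[nn] z)) e0 := rfl
        rw [h6]
        field_simp
        ring
    refine ⟨fun z => z e0 + ∑' k, ψ k z, ?_, ?_, ?_, ?_, ?_⟩
    · intro z
      have h1 := ((hsummψ z).hasSum.tendsto_sum_nat).const_add (z e0)
      exact h1.congr (fun n => (key n z).symm)
    · apply Continuous.add (PiLp.continuous_apply 2 _ e0)
      apply continuous_tsum (fun k => ?_) hu (fun k z => hψbound k z)
      exact continuous_const.mul ((PiLp.continuous_apply 2 _ e0).comp (hG.continuous.comp (hFk k)))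
    · intro z
      have h1 : |z e0 + ∑' k, ψ k z - z e0| = ‖∑' k, ψ k z‖ := by
        rw [Real.norm_eq_abs]; congr 1; ring
      rw [h1]
      calc ‖∑' k, ψ k z‖ ≤ ∑' k, ‖ψ k z‖ := norm_tsum_le_tsum_norm (hsummn z)
        _ ≤ ∑' k : ℕ, δ * a⁻¹ * (a⁻¹) ^ k := Summable.tsum_le_tsum (fun k => hψbound k z) (hsummn z) hu
        _ = δ * a⁻¹ * (1 - a⁻¹)⁻¹ := by
            rw [tsum_mul_left, tsum_geometric_of_lt_one hainv0.le hainv]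
        _ = Bc := by
            rw [hBc]
            have hane : a ≠ 0 := by linarith
            have hane1 : a - 1 ≠ 0 := by linarith
            field_simp
    · -- Φ (F z) = m * Φ z
      intro z
      have hlim : ∀ w, Tendsto (fun n : ℕ => ((m : ℝ) ^ n)⁻¹ * (F^[n] w) e0) atTop
          (𝓝 (w e0 + ∑' k, ψ k w)) := by
        intro w
        have h1 := ((hsummψ w).hasSum.tendsto_sum_nat).const_add (w e0)
        exact h1.congr (fun n => (key n w).symm)
      have h1 := hlim (F z)
      have h3 : Tendsto (fun n : ℕ => ((m : ℝ) ^ (n + 1))⁻¹ * (F^[n + 1] z) e0) atTop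
          (𝓝 (z e0 + ∑' k, ψ k z)) := (hlim z).comp (tendsto_add_atTop_nat 1)
      have h4 := h3.const_mul ((m : ℝ))
      have h2 : Tendsto (fun n : ℕ => ((m : ℝ) ^ n)⁻¹ * (F^[n] (F z)) e0) atTop
          (𝓝 ((m : ℝ) * (z e0 + ∑' k, ψ k z))) := by
        apply h4.congr
        intro n
        rw [← Function.iterate_succ_apply]
        field_simp
        ring
      exact tendsto_nhds_unique h1 h2
    · -- periodicity
      intro z p
      have hlim : ∀ w, Tendsto (fun n : ℕ => ((m : ℝ) ^ n)⁻¹ * (F^[n] w) e0) atTop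
          (𝓝 (w e0 + ∑' k, ψ k w)) := by
        intro w
        have h1 := ((hsummψ w).hasSum.tendsto_sum_nat).const_add (w e0)
        exact h1.congr (fun n => (key n w).symm)
      have h1 := hlim (z + toEuc d fun i => (p i : ℝ))
      have h2 : Tendsto (fun n : ℕ => ((m : ℝ) ^ n)⁻¹ * (F^[n] (z + toEuc d fun i => (p i : ℝ))) e0)
          atTop (𝓝 ((z e0 + ∑' k, ψ k z) + (p e0 : ℝ))) := by
        have h3 := (hlim z).add_const ((p e0 : ℝ))
        apply h3.congr
        intro n
        obtain ⟨q, hq1, hq2⟩ := hFnper n z p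
        rw [hq1]
        have h4 : (F^[n] z + toEuc d fun i => ((q i : ℤ) : ℝ)) e0
            = (F^[n] z) e0 + ((q e0 : ℤ) : ℝ) := rfl
        rw [h4, hq2]
        field_simp
      exact tendsto_nhds_unique h1 h2
  have hΦdiff : ∀ z z', |Φ z - Φ z' - (z e0 - z' e0)| ≤ 2 * Bc := by
    intro z z'
    have h1 := hΦbd z
    have h2 := hΦbd z'
    have h4 : Φ z - Φ z' - (z e0 - z' e0) = (Φ z - z e0) - (Φ z' - z' e0) := by ring
    rw [h4]
    have h5 : |(Φ z - z e0) - (Φ z' - z' e0)| ≤ |Φ z - z e0| + |Φ z' - z' e0| := abs_sub _ _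
    linarith
  have hΦFn : ∀ (n : ℕ) z, Φ (F^[n] z) = (m : ℝ) ^ n * Φ z := by
    intro n
    induction n with
    | zero => intro z; simp
    | succ k ih =>
      intro z
      rw [Function.iterate_succ_apply', hΦF, ih]
      ring
  -- cone/growth estimate
  have hGrowth : ∀ z z', projQ d 1 hd z = projQ d 1 hd z' → ∀ k : ℕ,
      ‖projQ d 1 hd (F^[k] z - F^[k] z')‖ ≤ |(F^[k] z) e0 - (F^[k] z') e0| ∧
      ((a + 1) / 2) ^ k * |z e0 - z' e0| ≤ |(F^[k] z) e0 - (F^[k] z') e0| := by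
    intro z z' hQ k
    induction k with
    | zero =>
      constructor
      · simp only [Function.iterate_zero_apply]
        rw [aux_projQ_sub, hQ, sub_self]
        simp [abs_nonneg]
      · simp
    | succ k ih =>
      obtain ⟨ihE, ihΔ⟩ := ih
      set w : EuclideanSpace ℝ (Fin d) := F^[k] z with hw
      set w' : EuclideanSpace ℝ (Fin d) := F^[k] z' with hw'
      set Δ : ℝ := w e0 - w' e0 with hΔdef
      have habs0 : (0:ℝ) ≤ |Δ| := abs_nonneg _
      have hsd0 : (0:ℝ) < sd := by linarith
      have hnorm : ‖w - w'‖ ≤ 2 * sd * |Δ| := by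
        have h1 := aux_norm_le hd (w - w')
        have h2 : (w - w') e0 = Δ := PiLp.sub_apply _ _ _ _
        rw [h2] at h1
        have h3 : ‖projQ d 1 hd (w - w')‖ ≤ |Δ| := ihE
        calc ‖w - w'‖ ≤ sd * (|Δ| + ‖projQ d 1 hd (w - w')‖) := h1
          _ ≤ sd * (|Δ| + |Δ|) := mul_le_mul_of_nonneg_left (by linarith) (by linarith)
          _ = 2 * sd * |Δ| := by ring
      have hGd : ‖G w - G w'‖ ≤ 2 * sd * δ * |Δ| := by
        calc ‖G w - G w'‖ ≤ δ * ‖w - w'‖ := hGlip w w'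
          _ ≤ δ * (2 * sd * |Δ|) := mul_le_mul_of_nonneg_left hnorm hδpos.le
          _ = 2 * sd * δ * |Δ| := by ring
      have hΔ' : (F w) e0 - (F w') e0 = (m:ℝ) * Δ + ((G w) e0 - (G w') e0) := by
        rw [hFe0, hFe0]; ring
      have hGc : |(G w) e0 - (G w') e0| ≤ 2 * sd * δ * |Δ| := by
        have h1 : (G w) e0 - (G w') e0 = (G w - G w') e0 := (PiLp.sub_apply _ _ _ _).symm
        rw [h1]
        exact le_trans (aux_coord_le _ _) hGd
      have hlow : (a - 2*sd*δ) * |Δ| ≤ |(F w) e0 - (F w') e0| := by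
        rw [hΔ']
        have h1 : |(m:ℝ) * Δ| = a * |Δ| := by rw [abs_mul, ← ha]
        have h2 := abs_add_le ((m:ℝ) * Δ + ((G w) e0 - (G w') e0)) (-((G w) e0 - (G w') e0))
        simp only [add_neg_cancel_right, abs_neg] at h2
        rw [h1] at h2
        linarith
      constructor
      · -- cone at k+1
        rw [Function.iterate_succ_apply', Function.iterate_succ_apply', ← hw, ← hw']
        have hE' : projQ d 1 hd (F w - F w')
            = C (projQ d 1 hd (w - w')) + projQ d 1 hd (G w - G w') := by
          rw [aux_projQ_sub, hFQ, hFQ, aux_projQ_sub, aux_projQ_sub, map_sub]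
          abel
        rw [hE']
        calc ‖C (projQ d 1 hd (w - w')) + projQ d 1 hd (G w - G w')‖
            ≤ ‖C (projQ d 1 hd (w - w'))‖ + ‖projQ d 1 hd (G w - G w')‖ := norm_add_le _ _
          _ ≤ ‖C‖ * |Δ| + 2*sd*δ*|Δ| := add_le_add
              (le_trans (C.le_opNorm _) (mul_le_mul_of_nonneg_left ihE (norm_nonneg _)))
              (le_trans (aux_projQ_norm_le hd _) hGd)
          _ = (‖C‖ + 2*sd*δ) * |Δ| := by ring
          _ ≤ (a - 2*sd*δ) * |Δ| := mul_le_mul_of_nonneg_right hcone habs0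
          _ ≤ |(F w) e0 - (F w') e0| := hlow
      · rw [Function.iterate_succ_apply', Function.iterate_succ_apply', ← hw, ← hw', pow_succ]
        calc ((a+1)/2)^k * ((a+1)/2) * |z e0 - z' e0|
            = ((a+1)/2) * (((a+1)/2)^k * |z e0 - z' e0|) := by ring
          _ ≤ ((a+1)/2) * |Δ| := mul_le_mul_of_nonneg_left ihΔ (by linarith)
          _ ≤ (a - 2*sd*δ) * |Δ| := mul_le_mul_of_nonneg_right hgrow habs0
          _ ≤ |(F w) e0 - (F w') e0| := hlow
  -- injectivity
  have hInj : Function.Injective (fun z => ((Φ z, projQ d 1 hd z) :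
      ℝ × EuclideanSpace ℝ (Fin (d - 1)))) := by
    intro z z' h
    simp only [Prod.mk.injEq] at h
    obtain ⟨h1, h2⟩ := h
    have he : z e0 = z' e0 := by
      by_contra hne
      have hΔpos : 0 < |z e0 - z' e0| := abs_pos.mpr (sub_ne_zero.mpr hne)
      obtain ⟨N, hN⟩ := pow_unbounded_of_one_lt ((2*Bc + 1)/|z e0 - z' e0|) hlam1
      have hbig : 2*Bc < ((a+1)/2)^N * |z e0 - z' e0| := by
        rw [div_lt_iff₀ hΔpos] at hN
        linarith
      have hgr := (hGrowth z z' h2 N).2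
      have heq : Φ (F^[N] z) = Φ (F^[N] z') := by rw [hΦFn, hΦFn, h1]
      have hd2 := hΦdiff (F^[N] z) (F^[N] z')
      rw [heq, sub_self, zero_sub, abs_neg] at hd2
      linarith
    ext i
    by_cases h0 : i.val = 0
    · have hie : i = e0 := Fin.ext h0
      rw [hie]; exact he
    · have hj : i.val - 1 < d - 1 := by have := i.isLt; omega
      have hi : i = ⟨1 + (i.val - 1), by have := i.isLt; omega⟩ := Fin.ext (by simp; omega)
      rw [hi]
      exact congrFun (congrArg WithLp.ofLp h2) ⟨i.val - 1, hj⟩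
  -- surjectivity
  have hSurj : Function.Surjective (fun z => ((Φ z, projQ d 1 hd z) :
      ℝ × EuclideanSpace ℝ (Fin (d - 1)))) := by
    rintro ⟨x, y⟩
    set ins : ℝ → EuclideanSpace ℝ (Fin d) :=
      fun t => WithLp.toLp 2 (fun i => if h : i.val = 0 then t else y ⟨i.val - 1, by have := i.isLt; omega⟩ :
        Fin d → ℝ) with hins
    have hins0 : ∀ t, ins t e0 = t := by
      intro t
      show (if h : (0:ℕ) = 0 then t else y ⟨0 - 1, by omega⟩) = t
      rw [dif_pos rfl]
    have hinsQ : ∀ t, projQ d 1 hd (ins t) = y := by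
      intro t; ext j
      have h1 : projQ d 1 hd (ins t) j = ins t ⟨1 + j.val, by have := j.isLt; omega⟩ := rfl
      rw [h1]
      show (if h : 1 + j.val = 0 then t else _) = y j
      rw [dif_neg (by omega)]
      refine congrArg y.ofLp ?_
      refine Fin.ext ?_; simp
    have hinscont : Continuous ins := by
      show Continuous (fun t => WithLp.toLp 2 (fun i : Fin d => if h : i.val = 0 then t else
        y ⟨i.val - 1, by have := i.isLt; omega⟩))
      apply (PiLp.continuous_toLp 2 _).comp
      apply continuous_pi
      intro i
      by_cases h0 : i.val = 0
      · simp only [hins, h0, dif_pos]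
        exact continuous_id
      · simp only [hins, h0, dif_neg]
        exact continuous_const
    have hfc : Continuous (fun t => Φ (ins t)) := hΦcont.comp hinscont
    have hfb : ∀ t, |Φ (ins t) - t| ≤ Bc := by
      intro t
      have := hΦbd (ins t)
      rw [hins0] at this
      exact this
    have h1 : Φ (ins (x - Bc - 1)) ≤ x := by
      have := abs_le.mp (hfb (x - Bc - 1)); linarith
    have h2 : x ≤ Φ (ins (x + Bc + 1)) := by
      have := abs_le.mp (hfb (x + Bc + 1)); linarith
    obtain ⟨t, _, ht⟩ := intermediate_value_Icc
      (by linarith : x - Bc - 1 ≤ x + Bc + 1) hfc.continuousOn ⟨h1, h2⟩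
    refine ⟨ins t, ?_⟩
    show (Φ (ins t), projQ d 1 hd (ins t)) = (x, y)
    rw [hinsQ t, show Φ (ins t) = x from ht]
  -- the homeomorphism
  obtain ⟨H, hH⟩ :
      ∃ H : EuclideanSpace ℝ (Fin d) ≃ₜ (ℝ × EuclideanSpace ℝ (Fin (d - 1))),
        ∀ z, H z = (Φ z, projQ d 1 hd z) := by
    have hHcont : Continuous (fun z => ((Φ z, projQ d 1 hd z) :
        ℝ × EuclideanSpace ℝ (Fin (d - 1)))) :=
      hΦcont.prodMk ((PiLp.continuous_toLp 2 _).comp (continuous_pi fun j => PiLp.continuous_apply 2 _ _))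
    have hclosed : IsClosedMap (fun z => ((Φ z, projQ d 1 hd z) :
        ℝ × EuclideanSpace ℝ (Fin (d - 1)))) := by
      apply IsProperMap.isClosedMap
      rw [isProperMap_iff_isCompact_preimage]
      refine ⟨hHcont, ?_⟩
      intro K hK
      obtain ⟨r, hr⟩ := hK.isBounded.subset_closedBall 0
      apply IsCompact.of_isClosed_subset
        (isCompact_closedBall (0 : EuclideanSpace ℝ (Fin d)) (sd * (2*r + Bc)))
        (hK.isClosed.preimage hHcont)
      intro z hz
      simp only [Set.mem_preimage] at hz
      have hzK := hr hz
      rw [Metric.mem_closedBall, dist_zero_right] at hzK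
      have hn1 : |Φ z| ≤ r := by
        have h := le_trans (norm_fst_le
          ((Φ z, projQ d 1 hd z) : ℝ × EuclideanSpace ℝ (Fin (d-1)))) hzK
        simpa using h
      have hn2 : ‖projQ d 1 hd z‖ ≤ r := by
        have h := le_trans (norm_snd_le
          ((Φ z, projQ d 1 hd z) : ℝ × EuclideanSpace ℝ (Fin (d-1)))) hzK
        simpa using h
      have hb := abs_le.mp (hΦbd z)
      have ha' := abs_le.mp hn1
      have hn3 : |z e0| ≤ r + Bc := abs_le.mpr (by constructor <;> linarith)
      rw [Metric.mem_closedBall, dist_zero_right]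
      calc ‖z‖ ≤ sd * (|z e0| + ‖projQ d 1 hd z‖) := aux_norm_le hd z
        _ ≤ sd * (2*r + Bc) := mul_le_mul_of_nonneg_left (by linarith) (by linarith)
    set Heq := Equiv.ofBijective _ ⟨hInj, hSurj⟩ with hHeq
    have hsymmc : Continuous Heq.symm := by
      rw [continuous_iff_isClosed]
      intro s hs
      rw [← Equiv.image_eq_preimage_symm]
      exact hclosed s hs
    exact ⟨⟨Heq, hHcont, hsymmc⟩, fun z => rfl⟩
  have hHsymm1 : ∀ w, Φ (H.symm w) = w.1 := by
    intro w
    have := hH (H.symm w)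
    rw [H.apply_symm_apply] at this
    exact (congrArg Prod.fst this).symm
  have hHsymm2 : ∀ w, projQ d 1 hd (H.symm w) = w.2 := by
    intro w
    have := hH (H.symm w)
    rw [H.apply_symm_apply] at this
    exact (congrArg Prod.snd this).symm
  refine ⟨Φ, hΦlim, H, hH, ?_, ?_, ?_⟩
  · -- equivariance
    intro z p
    rw [hH, hH, aux_projQ_add, hΦper]
    rfl
  · -- skew product form on ℝ^d
    refine ⟨fun w => projQ d 1 hd (F (H.symm w)), ?_, ?_⟩
    · have hq : Continuous (projQ d 1 hd) := (PiLp.continuous_toLp 2 _).comp (continuous_pi fun j => PiLp.continuous_apply 2 _ _)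
      exact hq.comp (hFcont.comp H.continuous_symm)
    · intro w
      rw [hH]
      have : Φ (F (H.symm w)) = (m : ℝ) * w.1 := by rw [hΦF, hHsymm1]
      rw [this]
  · -- torus part
    have htsurj := aux_torusProj_surj d
    have hcong : ∀ z z' : EuclideanSpace ℝ (Fin d), torusProj d z = torusProj d z' →
        ∃ p : Fin d → ℤ, z' = z + toEuc d (fun i => (p i : ℝ)) := by
      intro z z' h
      have h' : ∀ i, ∃ k : ℤ, z' i = z i + k :=
        fun i => (aux_coe_eq_coe (z i) (z' i)).mp (congrFun h i)
      refine ⟨fun i => (h' i).choose, PiLp.ext fun i => ?_⟩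
      exact (h' i).choose_spec
    have hshiftn : ∀ (n : ℕ) (z : EuclideanSpace ℝ (Fin n)) (p : Fin n → ℤ),
        torusProj n (z + toEuc n fun i => (p i : ℝ)) = torusProj n z := by
      intro n z p
      funext i
      show ((z i + (p i : ℝ) : ℝ) : AddCircle (1:ℝ)) = (z i : AddCircle (1:ℝ))
      exact ((aux_coe_eq_coe _ _).mpr ⟨p i, rfl⟩).symm
    set lift : (Fin d → AddCircle (1:ℝ)) → EuclideanSpace ℝ (Fin d) :=
      fun θ => (htsurj θ).choose with hliftdef
    have hliftspec : ∀ θ, torusProj d (lift θ) = θ := fun θ => (htsurj θ).choose_spec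
    set Fbar : (Fin d → AddCircle (1:ℝ)) → (Fin d → AddCircle (1:ℝ)) :=
      fun θ => torusProj d (F (lift θ)) with hFbardef
    have hFbar : ∀ z, Fbar (torusProj d z) = torusProj d (F z) := by
      intro z
      obtain ⟨p, hp⟩ := hcong (lift (torusProj d z)) z (hliftspec (torusProj d z))
      simp only [hFbardef]
      rw [show F z = F (lift (torusProj d z) + toEuc d fun i => ((p i : ℤ) : ℝ)) from by rw [← hp]]
      obtain ⟨q, hq, _⟩ := hFper (lift (torusProj d z)) p
      rw [hq, hshiftn d]
    have hPhibar : ∀ z, ((Φ (lift (torusProj d z)) : ℝ) : AddCircle (1:ℝ))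
        = ((Φ z : ℝ) : AddCircle (1:ℝ)) := by
      intro z
      obtain ⟨p, hp⟩ := hcong (lift (torusProj d z)) z (hliftspec (torusProj d z))
      rw [show Φ z = Φ (lift (torusProj d z)) + (p e0 : ℝ) from by rw [← hΦper, ← hp]]
      exact (aux_coe_eq_coe _ _).mpr ⟨p e0, rfl⟩
    set embed : Fin (d-1) → Fin d := fun j => ⟨1 + j.val, by have := j.isLt; omega⟩ with hembed
    set hbar : (Fin d → AddCircle (1:ℝ)) → AddCircle (1:ℝ) × (Fin (d-1) → AddCircle (1:ℝ)) :=
      fun θ => (((Φ (lift θ) : ℝ) : AddCircle (1:ℝ)), fun j => θ (embed j)) with hhbar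
    have hbar_eq : ∀ z, hbar (torusProj d z) =
        (((Φ z : ℝ) : AddCircle (1:ℝ)), torusProj (d-1) (projQ d 1 hd z)) := by
      intro z
      simp only [hhbar]
      refine congrArg₂ Prod.mk (hPhibar z) ?_
      funext j
      rfl
    have hbij : Function.Bijective hbar := by
      constructor
      · intro θ θ' hθ
        obtain ⟨z, hz⟩ := htsurj θ
        obtain ⟨z', hz'⟩ := htsurj θ'
        rw [← hz, ← hz'] at hθ ⊢
        rw [hbar_eq, hbar_eq] at hθ
        rw [Prod.ext_iff] at hθ
        obtain ⟨h1, h2⟩ := hθ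
        obtain ⟨n, hn⟩ := (aux_coe_eq_coe _ _).mp h1
        have h2' : ∀ j, ∃ k : ℤ, projQ d 1 hd z' j = projQ d 1 hd z j + k :=
          fun j => (aux_coe_eq_coe _ _).mp (congrFun h2 j)
        set p : Fin d → ℤ := fun i => if h : i.val = 0 then n
          else (h2' ⟨i.val - 1, by have := i.isLt; omega⟩).choose with hp
        have hpe0 : p e0 = n := by
          have h0 : (e0 : Fin d).val = 0 := rfl
          exact dif_pos h0
        have key : (fun w => ((Φ w, projQ d 1 hd w) : ℝ × EuclideanSpace ℝ (Fin (d-1))))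
            (z + toEuc d fun i => (p i : ℝ))
            = (fun w => ((Φ w, projQ d 1 hd w) : ℝ × EuclideanSpace ℝ (Fin (d-1)))) z' := by
          refine congrArg₂ Prod.mk ?_ ?_
          · rw [hΦper, hpe0, ← hn]
          · ext j
            have hlhs : projQ d 1 hd (z + toEuc d fun i => (p i : ℝ)) j
                = z (embed j) + (p (embed j) : ℝ) := rfl
            rw [hlhs]
            have hpj : p (embed j) = (h2' j).choose := by
              have h0 : ¬ ((embed j).val = 0) := by simp only [hembed]; omega
              have h1 : p (embed j)
                  = (h2' ⟨(embed j).val - 1, by have := (embed j).isLt; omega⟩).choose :=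
                dif_neg h0
              rw [h1]
              exact congrArg (fun i : Fin (d-1) => (h2' i).choose)
                (Fin.ext (by simp only [hembed]; simp))
            rw [hpj]
            exact ((h2' j).choose_spec).symm
        have hzz : z + toEuc d (fun i => (p i : ℝ)) = z' := hInj key
        rw [← hzz, hshiftn d]
      · rintro ⟨α, β⟩
        obtain ⟨x, hx⟩ := Quotient.exists_rep α
        obtain ⟨y, hy⟩ := aux_torusProj_surj (d-1) β
        obtain ⟨z, hz⟩ := hSurj (x, y)
        simp only [Prod.mk.injEq] at hz
        refine ⟨torusProj d z, ?_⟩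
        rw [hbar_eq]
        refine congrArg₂ Prod.mk ?_ ?_
        · rw [hz.1]; exact hx
        · rw [hz.2]; exact hy
    have hbarcont : Continuous hbar := by
      apply Continuous.prodMk
      · have hq := aux_quotientMap_torusProj d
        rw [hq.continuous_iff]
        have he : ((fun θ => ((Φ (lift θ) : ℝ) : AddCircle (1:ℝ))) ∘ torusProj d)
            = fun z => ((Φ z : ℝ) : AddCircle (1:ℝ)) := funext hPhibar
        show Continuous ((fun θ => ((Φ (lift θ) : ℝ) : AddCircle (1:ℝ))) ∘ torusProj d)
        rw [he]
        exact (QuotientAddGroup.isOpenQuotientMap_mk).continuous.comp hΦcont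
      · exact continuous_pi fun j => continuous_apply (embed j)
    set HbarEquiv := Equiv.ofBijective hbar hbij with hHbarEquiv
    have hbarcont' : Continuous (⇑HbarEquiv) := hbarcont
    set Hbar := hbarcont'.homeoOfEquivCompactToT2 with hHbardef
    have hHbar_apply : ∀ θ, Hbar θ = hbar θ := fun θ => rfl
    refine ⟨Fbar, Hbar, fun θ => (Hbar (Fbar (Hbar.symm θ))).2, hFbar, ?_, ?_⟩
    · intro z
      rw [hHbar_apply]
      exact hbar_eq z
    · intro θ
      refine Prod.ext ?_ rfl
      obtain ⟨z, hz⟩ := htsurj (Hbar.symm θ)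
      have hθ1 : θ.1 = ((Φ z : ℝ) : AddCircle (1:ℝ)) := by
        have h1 : Hbar (torusProj d z) = θ := by rw [hz]; exact Hbar.apply_symm_apply θ
        rw [← h1, hHbar_apply, hbar_eq]
      rw [← hz, hFbar]
      calc (Hbar (torusProj d (F z))).1 = ((Φ (F z) : ℝ) : AddCircle (1:ℝ)) := by
            rw [hHbar_apply, hbar_eq]
        _ = (((m : ℝ) * Φ z : ℝ) : AddCircle (1:ℝ)) := by rw [hΦF]
        _ = ((((m : ℤ) • Φ z : ℝ)) : AddCircle (1:ℝ)) := by rw [zsmul_eq_mul]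
        _ = (m : ℤ) • ((Φ z : ℝ) : AddCircle (1:ℝ)) :=
            map_zsmul (QuotientAddGroup.mk' _) m (Φ z)
        _ = m • θ.1 := by rw [hθ1]
end
end
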